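/- arXiv:1302.5226 — 6 statements merged into one kernel-verified Lean document; each statement's English description precedes it below -/
import Mathlib

section
/- For every x ∈ X, the Hopf oscillation seminorm equals twice the quotient norm of Thompson's norm modulo the line ℝe: ‖x‖_H = 2 · inf_{λ ∈ ℝ} ‖x + λe‖_T. -/
noncomputable section

/-- `M(x/y) = inf {t : ℝ | x ≤ t • y}`, where `x ≤ z` means `z - x ∈ C`. -/
def upSlope {X : Type*} [AddCommGroup X] [Module ℝ X] (C : Set X) (y x : X) : ℝ :=
  sInf {t : ℝ | t • y - x ∈ C}

/-- `m(x/y) = sup {t : ℝ | t • y ≤ x}`, where `x ≤ z` means `z - x ∈ C`. -/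
def lowSlope {X : Type*} [AddCommGroup X] [Module ℝ X] (C : Set X) (y x : X) : ℝ :=
  sSup {t : ℝ | x - t • y ∈ C}

/-- Thompson's norm `‖x‖_T = max (M(x/e), -m(x/e))` with respect to the unit `e`. -/
def thompsonNorm {X : Type*} [AddCommGroup X] [Module ℝ X] (C : Set X) (e x : X) : ℝ :=
  max (upSlope C e x) (-(lowSlope C e x))

/-- Hopf's oscillation seminorm `‖x‖_H = M(x/e) - m(x/e)` with respect to the unit `e`. -/
def hopfOsc {X : Type*} [AddCommGroup X] [Module ℝ X] (C : Set X) (e x : X) : ℝ :=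
  upSlope C e x - lowSlope C e x

/-- The oscillation `ω(x/y) = M(x/y) - m(x/y)`. -/
def oscGen {X : Type*} [AddCommGroup X] [Module ℝ X] (C : Set X) (y x : X) : ℝ :=
  upSlope C y x - lowSlope C y x

/-- Hilbert's projective metric `d_H(x,y) = log (M(x/y) / m(x/y))`. -/
def hilbertDist {X : Type*} [AddCommGroup X] [Module ℝ X] (C : Set X) (x y : X) : ℝ :=
  Real.log (upSlope C y x / lowSlope C y x)

/-- The dual cone `C⋆ = {μ ∈ X⋆ : ⟨μ,x⟩ ≥ 0 ∀ x ∈ C}` inside the topological dual. -/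
def dualCone {X : Type*} [NormedAddCommGroup X] [NormedSpace ℝ X] (C : Set X) :
    Set (X →L[ℝ] ℝ) := {μ | ∀ x ∈ C, 0 ≤ μ x}

/-- The simplex `P(e) = {μ ∈ C⋆ : ⟨μ,e⟩ = 1}`. -/
def simplexSet {X : Type*} [NormedAddCommGroup X] [NormedSpace ℝ X] (C : Set X) (e : X) :
    Set (X →L[ℝ] ℝ) := {μ | μ ∈ dualCone C ∧ μ e = 1}

/-- The dual norm of Thompson's norm. -/
def dualTNorm {X : Type*} [NormedAddCommGroup X] [NormedSpace ℝ X] (C : Set X) (e : X)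
    (μ : X →L[ℝ] ℝ) : ℝ :=
  sSup {r : ℝ | ∃ x : X, thompsonNorm C e x ≤ 1 ∧ r = μ x}

/-- Disjointness `ν ⊥ π` of two elements of the simplex `P(e)`. -/
def disjointIn {X : Type*} [NormedAddCommGroup X] [NormedSpace ℝ X] (C : Set X) (e : X)
    (ν π : X →L[ℝ] ℝ) : Prop :=
  ∀ μ ∈ simplexSet C e, μ - (2:ℝ)⁻¹ • ν ∈ dualCone C → μ - (2:ℝ)⁻¹ • π ∈ dualCone C →
    μ = (2:ℝ)⁻¹ • (ν + π)

/-- The order interval `[0,e] = {x : 0 ≤ x ≤ e}`. -/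
def orderIntv {X : Type*} [AddCommGroup X] (C : Set X) (e : X) : Set X :=
  {x | x ∈ C ∧ e - x ∈ C}

/-- The operator (semi)norm of `T` with respect to Hopf's oscillation seminorms. -/
def opHNorm {X₁ : Type*} {X₂ : Type*} [NormedAddCommGroup X₁] [NormedSpace ℝ X₁]
    [NormedAddCommGroup X₂] [NormedSpace ℝ X₂] (C₁ : Set X₁) (e₁ : X₁) (C₂ : Set X₂) (e₂ : X₂)
    (T : X₁ →L[ℝ] X₂) : ℝ :=
  sSup {r : ℝ | ∃ z : X₁, hopfOsc C₁ e₁ z ≤ 1 ∧ r = hopfOsc C₂ e₂ (T z)}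

/-- `C` is a closed pointed convex cone. -/
def IsCPCone {X : Type*} [NormedAddCommGroup X] [NormedSpace ℝ X] (C : Set X) : Prop :=
  IsClosed C ∧ (∀ x ∈ C, ∀ y ∈ C, x + y ∈ C) ∧ (∀ t : ℝ, 0 ≤ t → ∀ x ∈ C, t • x ∈ C) ∧
    (∀ x ∈ C, -x ∈ C → x = 0)

/-- `C` is a normal cone: `0 ≤ x ≤ y` implies `‖x‖ ≤ K ‖y‖` for some `K > 0`. -/
def IsNormalCone {X : Type*} [NormedAddCommGroup X] [NormedSpace ℝ X] (C : Set X) : Prop :=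
  ∃ K > (0:ℝ), ∀ x y : X, x ∈ C → y - x ∈ C → ‖x‖ ≤ K * ‖y‖

/-- The contraction rate `h(L)` of the linear flow `ẋ = L(x)` in Hopf's oscillation seminorm. -/
def hFun {X : Type*} [NormedAddCommGroup X] [NormedSpace ℝ X] (C : Set X) (e : X)
    (L : X →L[ℝ] X) : ℝ :=
  - sInf {r : ℝ | ∃ ν ∈ Set.extremePoints ℝ (simplexSet C e),
      ∃ π ∈ Set.extremePoints ℝ (simplexSet C e),
      ∃ x ∈ Set.extremePoints ℝ (orderIntv C e),
        ν x + π (e - x) = 0 ∧ r = ν (L x) + π (L (e - x))}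

end

section Aux

variable {X : Type*} [NormedAddCommGroup X] [NormedSpace ℝ X]
  {C : Set X} {e : X}

lemma aux_up_nonempty (hC : IsCPCone C) (he : e ∈ interior C) (x : X) :
    {t : ℝ | t • e - x ∈ C}.Nonempty := by
  obtain ⟨ε, hε, hball⟩ := Metric.isOpen_iff.mp isOpen_interior e he
  set t : ℝ := ‖x‖ / ε + 1 with ht
  have ht0 : 0 < t := by positivity
  refine ⟨t, ?_⟩
  have hmem : e - t⁻¹ • x ∈ Metric.ball e ε := by
    rw [Metric.mem_ball, dist_eq_norm]
    have : e - t⁻¹ • x - e = -(t⁻¹ • x) := by abel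
    rw [this, norm_neg, norm_smul, Real.norm_eq_abs, abs_inv, abs_of_pos ht0]
    rw [inv_mul_lt_iff₀ ht0]
    have h1 : ‖x‖ / ε < t := by simp [ht]
    calc ‖x‖ = ε * (‖x‖ / ε) := by field_simp
    _ < ε * t := mul_lt_mul_of_pos_left h1 hε
    _ = t * ε := mul_comm _ _
  have hmem' : e - t⁻¹ • x ∈ C := interior_subset (hball hmem)
  have := hC.2.2.1 t ht0.le _ hmem'
  rwa [smul_sub, smul_inv_smul₀ ht0.ne'] at this

lemma aux_low_nonempty (hC : IsCPCone C) (he : e ∈ interior C) (x : X) :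
    {t : ℝ | x - t • e ∈ C}.Nonempty := by
  obtain ⟨s, hs⟩ := aux_up_nonempty hC he (-x)
  refine ⟨-s, ?_⟩
  have : x - (-s) • e = s • e - -x := by rw [neg_smul]; abel
  rw [Set.mem_setOf_eq, this]
  exact hs

lemma aux_low_le_up (hC : IsCPCone C) (he : e ∈ interior C) (he0 : e ≠ 0) {x : X} {s t : ℝ}
    (hs : x - s • e ∈ C) (ht : t • e - x ∈ C) : s ≤ t := by
  by_contra h
  push_neg at h
  have hsum : (t - s) • e ∈ C := by
    have := hC.2.1 _ hs _ ht
    have heq : x - s • e + (t • e - x) = (t - s) • e := by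
      rw [sub_smul]; abel
    rwa [heq] at this
  have hst : (s - t) • e ∈ C := hC.2.2.1 (s - t) (by linarith) e (interior_subset he)
  have : (s - t) • e = 0 := hC.2.2.2 _ hst (by rwa [← neg_smul, neg_sub])
  rcases smul_eq_zero.mp this with h' | h'
  · linarith [sub_eq_zero.mp h']
  · exact he0 h'

lemma aux_up_bddBelow (hC : IsCPCone C) (he : e ∈ interior C) (he0 : e ≠ 0) (x : X) :
    BddBelow {t : ℝ | t • e - x ∈ C} := by
  obtain ⟨s, hs⟩ := aux_low_nonempty hC he x
  exact ⟨s, fun t ht => aux_low_le_up hC he he0 hs ht⟩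

lemma aux_low_bddAbove (hC : IsCPCone C) (he : e ∈ interior C) (he0 : e ≠ 0) (x : X) :
    BddAbove {t : ℝ | x - t • e ∈ C} := by
  obtain ⟨s, hs⟩ := aux_up_nonempty hC he x
  exact ⟨s, fun t ht => aux_low_le_up hC he he0 ht hs⟩

lemma aux_up_shift (hC : IsCPCone C) (he : e ∈ interior C) (he0 : e ≠ 0) (x : X) (l : ℝ) :
    upSlope C e (x + l • e) = upSlope C e x + l := by
  have hset : {t : ℝ | t • e - (x + l • e) ∈ C} =
      (OrderIso.addRight l) '' {t : ℝ | t • e - x ∈ C} := by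
    ext t
    simp only [Set.mem_image, Set.mem_setOf_eq, OrderIso.addRight_apply]
    constructor
    · intro h
      refine ⟨t - l, ?_, by ring⟩
      have : (t - l) • e - x = t • e - (x + l • e) := by rw [sub_smul]; abel
      rwa [this]
    · rintro ⟨s, hs, rfl⟩
      have : (s + l) • e - (x + l • e) = s • e - x := by rw [add_smul]; abel
      rwa [this]
  rw [upSlope, hset,
    ← (OrderIso.addRight l).map_csInf' (aux_up_nonempty hC he x) (aux_up_bddBelow hC he he0 x)]
  rfl

lemma aux_low_shift (hC : IsCPCone C) (he : e ∈ interior C) (he0 : e ≠ 0) (x : X) (l : ℝ) :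
    lowSlope C e (x + l • e) = lowSlope C e x + l := by
  have hset : {t : ℝ | (x + l • e) - t • e ∈ C} =
      (OrderIso.addRight l) '' {t : ℝ | x - t • e ∈ C} := by
    ext t
    simp only [Set.mem_image, Set.mem_setOf_eq, OrderIso.addRight_apply]
    constructor
    · intro h
      refine ⟨t - l, ?_, by ring⟩
      have : x - (t - l) • e = (x + l • e) - t • e := by rw [sub_smul]; abel
      rwa [this]
    · rintro ⟨s, hs, rfl⟩
      have : (x + l • e) - (s + l) • e = x - s • e := by rw [add_smul]; abel
      rwa [this]
  rw [lowSlope, hset,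
    ← (OrderIso.addRight l).map_csSup' (aux_low_nonempty hC he x) (aux_low_bddAbove hC he he0 x)]
  rfl

lemma aux_low_le_up_slope (hC : IsCPCone C) (he : e ∈ interior C) (he0 : e ≠ 0) (x : X) :
    lowSlope C e x ≤ upSlope C e x := by
  apply csSup_le (aux_low_nonempty hC he x)
  intro s hs
  exact le_csInf (aux_up_nonempty hC he x) fun t ht => aux_low_le_up hC he he0 hs ht

end Aux


theorem hopf_oscillation_eq_two_mul_quotient_thompson
    {X : Type*} [NormedAddCommGroup X] [NormedSpace ℝ X] [CompleteSpace X]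
    (C : Set X) (e : X) (hC : IsCPCone C) (hnormal : IsNormalCone C)
    (he : e ∈ interior C) (x : X) :
    hopfOsc C e x = 2 * ⨅ l : ℝ, thompsonNorm C e (x + l • e) := by
  by_cases he0 : e = 0
  · -- degenerate case: C = univ
    obtain ⟨ε, hε, hball⟩ := Metric.isOpen_iff.mp isOpen_interior e he
    have hCuniv : C = Set.univ := by
      ext y
      simp only [Set.mem_univ, iff_true]
      set c : ℝ := ε / (2 * (‖y‖ + 1)) with hc
      have hc0 : 0 < c := by positivity
      have hmem : c • y ∈ C := by
        apply interior_subset; apply hball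
        rw [Metric.mem_ball, dist_eq_norm, he0, sub_zero, norm_smul, Real.norm_eq_abs,
          abs_of_pos hc0, hc]
        rw [div_mul_eq_mul_div, div_lt_iff₀ (by positivity)]
        nlinarith [norm_nonneg y]
      have := hC.2.2.1 c⁻¹ (by positivity) _ hmem
      rwa [inv_smul_smul₀ hc0.ne'] at this
    have hU : ∀ z : X, {t : ℝ | t • e - z ∈ C} = Set.univ := by
      intro z; ext t; simp [hCuniv]
    have hL : ∀ z : X, {t : ℝ | z - t • e ∈ C} = Set.univ := by
      intro z; ext t; simp [hCuniv]
    have hinf : sInf (Set.univ : Set ℝ) = 0 :=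
      Real.sInf_of_not_bddBelow (by simp [bddBelow_def]; intro x; exact ⟨x-1, by linarith⟩)
    have hsup : sSup (Set.univ : Set ℝ) = 0 :=
      Real.sSup_of_not_bddAbove (by simp [bddAbove_def]; intro x; exact ⟨x+1, by linarith⟩)
    have hT : ∀ z : X, thompsonNorm C e z = 0 := by
      intro z
      simp [thompsonNorm, upSlope, lowSlope, hU z, hL z, hinf, hsup]
    simp [hopfOsc, upSlope, lowSlope, hU x, hL x, hinf, hsup, hT, ciInf_const]
  · set M := upSlope C e x with hM
    set m := lowSlope C e x with hm
    have hmM : m ≤ M := aux_low_le_up_slope hC he he0 x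
    have hTl : ∀ l : ℝ, thompsonNorm C e (x + l • e) = max (M + l) (-(m + l)) := by
      intro l
      rw [thompsonNorm, aux_up_shift hC he he0 x l, aux_low_shift hC he he0 x l]
    have hlb : ∀ l : ℝ, (M - m) / 2 ≤ thompsonNorm C e (x + l • e) := by
      intro l
      rw [hTl l]
      rcases le_total ((M - m)/2) (M + l) with h | h
      · exact le_max_of_le_left h
      · apply le_max_of_le_right; linarith
    have hval : thompsonNorm C e (x + (-(M + m)/2) • e) = (M - m) / 2 := by
      rw [hTl]
      have h1 : M + -(M + m)/2 = (M - m)/2 := by ring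
      have h2 : -(m + -(M + m)/2) = (M - m)/2 := by ring
      rw [h1, h2, max_self]
    have h1 : (⨅ l : ℝ, thompsonNorm C e (x + l • e)) ≤ (M - m) / 2 := by
      rw [← hval]
      exact ciInf_le ⟨(M - m)/2, fun r ⟨l, hl⟩ => hl ▸ hlb l⟩ _
    have h2 : (M - m) / 2 ≤ ⨅ l : ℝ, thompsonNorm C e (x + l • e) := le_ciInf hlb
    have : (⨅ l : ℝ, thompsonNorm C e (x + l • e)) = (M - m) / 2 := le_antisymm h1 h2
    rw [this, hopfOsc, ← hM, ← hm]
    ring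
end

section
/- For every continuous linear functional μ ∈ X⋆ with ⟨μ,e⟩ = 0, the operator norm of μ with respect to Hopf's oscillation seminorm is half the dual Thompson norm: sup{⟨μ,x⟩ : x ∈ X, ‖x‖_H ≤ 1} = (1/2)‖μ‖_T⋆. Consequently the dual of the quotient Banach space (X/ℝe, ‖·‖_H) is isometric to the hyperplane {μ ∈ X⋆ : ⟨μ,e⟩ = 0} equipped with the norm (1/2)‖·‖_T⋆. -/
section AuxForDualHopf

open Set

private lemma real_sInf_affine {S : Set ℝ} (hne : S.Nonempty) (hbd : BddBelow S)
    {a : ℝ} (ha : 0 < a) (c : ℝ) :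
    sInf {t : ℝ | a * t + c ∈ S} = (sInf S - c) / a := by
  obtain ⟨s, hs⟩ := hne
  have hTne : {t : ℝ | a * t + c ∈ S}.Nonempty := by
    refine ⟨(s - c) / a, ?_⟩
    have : a * ((s - c) / a) + c = s := by field_simp; ring
    simpa [Set.mem_setOf_eq, this]
  refine IsGLB.csInf_eq ⟨?_, ?_⟩ hTne
  · intro t ht
    have h1 : sInf S ≤ a * t + c := csInf_le hbd ht
    rw [div_le_iff₀ ha]
    linarith [mul_comm a t]
  · intro b hb
    rw [le_div_iff₀ ha]
    have h2 : ∀ u ∈ S, b * a + c ≤ u := by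
      intro u hu
      have hmem : (u - c) / a ∈ {t : ℝ | a * t + c ∈ S} := by
        have : a * ((u - c) / a) + c = u := by field_simp; ring
        simpa [Set.mem_setOf_eq, this]
      have := hb hmem
      rw [le_div_iff₀ ha] at this
      linarith
    have := le_csInf ⟨s, hs⟩ h2
    linarith

private lemma real_sSup_affine {S : Set ℝ} (hne : S.Nonempty) (hbd : BddAbove S)
    {a : ℝ} (ha : 0 < a) (c : ℝ) :
    sSup {t : ℝ | a * t + c ∈ S} = (sSup S - c) / a := by
  obtain ⟨s, hs⟩ := hne
  have hTne : {t : ℝ | a * t + c ∈ S}.Nonempty := by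
    refine ⟨(s - c) / a, ?_⟩
    have : a * ((s - c) / a) + c = s := by field_simp; ring
    simpa [Set.mem_setOf_eq, this]
  refine IsLUB.csSup_eq ⟨?_, ?_⟩ hTne
  · intro t ht
    have h1 : a * t + c ≤ sSup S := le_csSup hbd ht
    rw [le_div_iff₀ ha]
    linarith [mul_comm a t]
  · intro b hb
    rw [div_le_iff₀ ha]
    have h2 : ∀ u ∈ S, u ≤ b * a + c := by
      intro u hu
      have hmem : (u - c) / a ∈ {t : ℝ | a * t + c ∈ S} := by
        have : a * ((u - c) / a) + c = u := by field_simp; ring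
        simpa [Set.mem_setOf_eq, this]
      have := hb hmem
      rw [div_le_iff₀ ha] at this
      linarith
    have := csSup_le ⟨s, hs⟩ h2
    linarith

variable {X : Type*} [NormedAddCommGroup X] [NormedSpace ℝ X]

private lemma cone_smul_e_nonneg {C : Set X} {e : X} (hC : IsCPCone C) (heC : e ∈ C)
    (he0 : e ≠ 0) {c : ℝ} (h : c • e ∈ C) : 0 ≤ c := by
  by_contra hneg
  push_neg at hneg
  have h2 : -(c • e) ∈ C := by
    have := hC.2.2.1 (-c) (by linarith) e heC
    simpa [neg_smul] using this
  have := hC.2.2.2 _ h h2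
  rcases smul_eq_zero.mp this with h | h
  · exact absurd h (by linarith)
  · exact he0 h

private lemma upSet_nonempty {C : Set X} {e : X} (hC : IsCPCone C) (he : e ∈ interior C)
    (x : X) : {t : ℝ | t • e - x ∈ C}.Nonempty := by
  obtain ⟨ε, hε, hball⟩ := Metric.isOpen_iff.mp isOpen_interior e he
  set t : ℝ := ‖x‖ / ε + 1 with ht_def
  have ht : 0 < t := by positivity
  refine ⟨t, ?_⟩
  have hmem : e - t⁻¹ • x ∈ Metric.ball e ε := by
    rw [Metric.mem_ball, dist_eq_norm]
    rw [show e - t⁻¹ • x - e = -(t⁻¹ • x) by abel, norm_neg, norm_smul,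
      Real.norm_eq_abs, abs_of_pos (by positivity)]
    rw [inv_mul_lt_iff₀ ht]
    have h5 : t * ε = ‖x‖ + ε := by rw [ht_def, add_mul, div_mul_cancel₀ _ hε.ne']; ring
    rw [h5]; linarith
  have hmem' : e - t⁻¹ • x ∈ C := interior_subset (hball hmem)
  have := hC.2.2.1 t ht.le _ hmem'
  rwa [smul_sub, smul_inv_smul₀ ht.ne'] at this

private lemma lowSet_nonempty {C : Set X} {e : X} (hC : IsCPCone C) (he : e ∈ interior C)
    (x : X) : {s : ℝ | x - s • e ∈ C}.Nonempty := by
  obtain ⟨t, ht⟩ := upSet_nonempty hC he (-x)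
  exact ⟨-t, by simp only [Set.mem_setOf_eq, neg_smul, sub_neg_eq_add]; rw [add_comm]; simpa using ht⟩

private lemma low_le_up_mem {C : Set X} {e : X} (hC : IsCPCone C) (heC : e ∈ C) (he0 : e ≠ 0)
    {x : X} {t s : ℝ} (ht : t • e - x ∈ C) (hs : x - s • e ∈ C) : s ≤ t := by
  have hsum : (t - s) • e ∈ C := by
    have := hC.2.1 _ ht _ hs
    rw [sub_smul]
    convert this using 1; abel
  linarith [cone_smul_e_nonneg hC heC he0 hsum]

private lemma upSet_bddBelow {C : Set X} {e : X} (hC : IsCPCone C) (he : e ∈ interior C)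
    (he0 : e ≠ 0) (x : X) : BddBelow {t : ℝ | t • e - x ∈ C} := by
  obtain ⟨s, hs⟩ := lowSet_nonempty hC he x
  exact ⟨s, fun t ht => low_le_up_mem hC (interior_subset he) he0 ht hs⟩

private lemma lowSet_bddAbove {C : Set X} {e : X} (hC : IsCPCone C) (he : e ∈ interior C)
    (he0 : e ≠ 0) (x : X) : BddAbove {s : ℝ | x - s • e ∈ C} := by
  obtain ⟨t, ht⟩ := upSet_nonempty hC he x
  exact ⟨t, fun s hs => low_le_up_mem hC (interior_subset he) he0 ht hs⟩

private lemma lowSlope_le_upSlope {C : Set X} {e : X} (hC : IsCPCone C) (he : e ∈ interior C)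
    (he0 : e ≠ 0) (x : X) : lowSlope C e x ≤ upSlope C e x := by
  refine csSup_le (lowSet_nonempty hC he x) fun s hs =>
    le_csInf (upSet_nonempty hC he x) fun t ht =>
      low_le_up_mem hC (interior_subset he) he0 ht hs

private lemma upSlope_sub_smul {C : Set X} {e : X} (hC : IsCPCone C) (he : e ∈ interior C)
    (he0 : e ≠ 0) (x : X) (c : ℝ) : upSlope C e (x - c • e) = upSlope C e x - c := by
  have hset : {t : ℝ | t • e - (x - c • e) ∈ C}
      = {t : ℝ | 1 * t + c ∈ {u : ℝ | u • e - x ∈ C}} := by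
    ext t
    simp only [Set.mem_setOf_eq, one_mul, add_smul]
    constructor <;> intro h <;>
      · convert h using 1; abel
  rw [upSlope, hset, real_sInf_affine (upSet_nonempty hC he x) (upSet_bddBelow hC he he0 x)
    one_pos c]
  simp [upSlope]

private lemma lowSlope_sub_smul {C : Set X} {e : X} (hC : IsCPCone C) (he : e ∈ interior C)
    (he0 : e ≠ 0) (x : X) (c : ℝ) : lowSlope C e (x - c • e) = lowSlope C e x - c := by
  have hset : {s : ℝ | (x - c • e) - s • e ∈ C}
      = {s : ℝ | 1 * s + c ∈ {u : ℝ | x - u • e ∈ C}} := by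
    ext s
    simp only [Set.mem_setOf_eq, one_mul, add_smul]
    constructor <;> intro h <;>
      · convert h using 1; abel
  rw [lowSlope, hset, real_sSup_affine (lowSet_nonempty hC he x) (lowSet_bddAbove hC he he0 x)
    one_pos c]
  simp [lowSlope]

private lemma upSlope_smul {C : Set X} {e : X} (hC : IsCPCone C) (he : e ∈ interior C)
    (he0 : e ≠ 0) (x : X) {a : ℝ} (ha : 0 < a) : upSlope C e (a • x) = a * upSlope C e x := by
  have hset : {t : ℝ | t • e - a • x ∈ C}
      = {t : ℝ | a⁻¹ * t + 0 ∈ {u : ℝ | u • e - x ∈ C}} := by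
    ext t
    simp only [Set.mem_setOf_eq, add_zero]
    constructor
    · intro h
      have h2 := hC.2.2.1 a⁻¹ (by positivity) _ h
      rw [smul_sub, smul_smul] at h2
      rwa [inv_smul_smul₀ ha.ne'] at h2
    · intro h
      have h2 := hC.2.2.1 a ha.le _ h
      rw [smul_sub, smul_smul] at h2
      have h3 : a * (a⁻¹ * t) = t := by field_simp
      rwa [h3] at h2
  rw [upSlope, hset, real_sInf_affine (upSet_nonempty hC he x) (upSet_bddBelow hC he he0 x)
    (by positivity : (0:ℝ) < a⁻¹) 0]
  rw [sub_zero, div_eq_mul_inv, inv_inv, mul_comm]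
  rfl

private lemma lowSlope_smul {C : Set X} {e : X} (hC : IsCPCone C) (he : e ∈ interior C)
    (he0 : e ≠ 0) (x : X) {a : ℝ} (ha : 0 < a) : lowSlope C e (a • x) = a * lowSlope C e x := by
  have hset : {s : ℝ | a • x - s • e ∈ C}
      = {s : ℝ | a⁻¹ * s + 0 ∈ {u : ℝ | x - u • e ∈ C}} := by
    ext s
    simp only [Set.mem_setOf_eq, add_zero]
    constructor
    · intro h
      have h2 := hC.2.2.1 a⁻¹ (by positivity) _ h
      rw [smul_sub, smul_smul, smul_smul] at h2
      have h3 : a⁻¹ * a = 1 := inv_mul_cancel₀ ha.ne'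
      rwa [h3, one_smul] at h2
    · intro h
      have h2 := hC.2.2.1 a ha.le _ h
      rw [smul_sub, smul_smul] at h2
      have h3 : a * (a⁻¹ * s) = s := by field_simp
      rwa [h3] at h2
  rw [lowSlope, hset, real_sSup_affine (lowSet_nonempty hC he x) (lowSet_bddAbove hC he he0 x)
    (by positivity : (0:ℝ) < a⁻¹) 0]
  rw [sub_zero, div_eq_mul_inv, inv_inv, mul_comm]
  rfl

private lemma upSlope_zero {C : Set X} {e : X} (hC : IsCPCone C) (he : e ∈ interior C)
    (he0 : e ≠ 0) : upSlope C e (0 : X) = 0 := by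
  have hset : {t : ℝ | t • e - (0:X) ∈ C} = Set.Ici 0 := by
    ext t
    simp only [sub_zero, Set.mem_setOf_eq, Set.mem_Ici]
    exact ⟨fun h => cone_smul_e_nonneg hC (interior_subset he) he0 h,
      fun h => hC.2.2.1 t h e (interior_subset he)⟩
  rw [upSlope, hset, csInf_Ici]

private lemma lowSlope_zero {C : Set X} {e : X} (hC : IsCPCone C) (he : e ∈ interior C)
    (he0 : e ≠ 0) : lowSlope C e (0 : X) = 0 := by
  have hset : {s : ℝ | (0:X) - s • e ∈ C} = Set.Iic 0 := by
    ext s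
    simp only [zero_sub, Set.mem_setOf_eq, Set.mem_Iic, ← neg_smul]
    constructor
    · intro h
      have := cone_smul_e_nonneg hC (interior_subset he) he0 h
      linarith
    · intro h
      exact hC.2.2.1 (-s) (by linarith) e (interior_subset he)
  rw [lowSlope, hset, csSup_Iic]

private lemma upSlope_mem {C : Set X} {e : X} (hC : IsCPCone C) (he : e ∈ interior C)
    (he0 : e ≠ 0) (x : X) : (upSlope C e x) • e - x ∈ C := by
  have hcl : IsClosed {t : ℝ | t • e - x ∈ C} :=
    hC.1.preimage ((continuous_id.smul continuous_const).sub continuous_const)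
  exact hcl.csInf_mem (upSet_nonempty hC he x) (upSet_bddBelow hC he he0 x)

private lemma lowSlope_mem {C : Set X} {e : X} (hC : IsCPCone C) (he : e ∈ interior C)
    (he0 : e ≠ 0) (x : X) : x - (lowSlope C e x) • e ∈ C := by
  have hcl : IsClosed {s : ℝ | x - s • e ∈ C} :=
    hC.1.preimage (continuous_const.sub (continuous_id.smul continuous_const))
  exact hcl.csSup_mem (lowSet_nonempty hC he x) (lowSet_bddAbove hC he he0 x)

end AuxForDualHopf

theorem dual_hopf_norm_eq_half_dual_thompson
    {X : Type*} [NormedAddCommGroup X] [NormedSpace ℝ X] [CompleteSpace X]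
    (C : Set X) (e : X) (hC : IsCPCone C) (hnormal : IsNormalCone C)
    (he : e ∈ interior C) (μ : X →L[ℝ] ℝ) (hμ : μ e = 0) :
    sSup {r : ℝ | ∃ x : X, hopfOsc C e x ≤ 1 ∧ r = μ x} = (1 / 2) * dualTNorm C e μ := by
  classical
  by_cases he0 : e = 0
  · -- degenerate case: X is trivial
    subst he0
    have hzero : ∀ x : X, x = 0 := by
      intro x
      obtain ⟨ε, hε, hball⟩ := Metric.isOpen_iff.mp isOpen_interior 0 he
      set a : ℝ := ε / 2 / (‖x‖ + 1) with ha_def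
      have ha : 0 < a := by positivity
      have hmem : a • x ∈ C := by
        apply interior_subset; apply hball
        rw [Metric.mem_ball, dist_zero_right, norm_smul, Real.norm_eq_abs, abs_of_pos ha]
        have h1 : ‖x‖ < ‖x‖ + 1 := by linarith
        calc a * ‖x‖ ≤ a * (‖x‖ + 1) := by nlinarith [norm_nonneg x]
          _ = ε / 2 := by rw [ha_def, div_mul_cancel₀ _ (by positivity)]
          _ < ε := by linarith
      have hmem' : -(a • x) ∈ C := by
        apply interior_subset; apply hball
        rw [Metric.mem_ball, dist_zero_right, norm_neg, norm_smul, Real.norm_eq_abs,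
          abs_of_pos ha]
        calc a * ‖x‖ ≤ a * (‖x‖ + 1) := by nlinarith [norm_nonneg x]
          _ = ε / 2 := by rw [ha_def, div_mul_cancel₀ _ (by positivity)]
          _ < ε := by linarith
      have := hC.2.2.2 _ hmem hmem'
      rcases smul_eq_zero.mp this with h | h
      · exact absurd h ha.ne'
      · exact h
    have h0C : (0:X) ∈ C := interior_subset he
    have hup0 : upSlope C (0:X) (0:X) = 0 := by
      have hset : {t : ℝ | t • (0:X) - 0 ∈ C} = Set.univ := by
        ext t; simp [h0C]
      rw [upSlope, hset, Real.sInf_of_not_bddBelow not_bddBelow_univ]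
    have hlow0 : lowSlope C (0:X) (0:X) = 0 := by
      have hset : {s : ℝ | (0:X) - s • (0:X) ∈ C} = Set.univ := by
        ext s; simp [h0C]
      rw [lowSlope, hset, Real.sSup_univ]
    have hAset : {r : ℝ | ∃ x : X, hopfOsc C 0 x ≤ 1 ∧ r = μ x} = {0} := by
      ext r
      simp only [Set.mem_setOf_eq, Set.mem_singleton_iff]
      constructor
      · rintro ⟨x, _, rfl⟩
        rw [hzero x, map_zero]
      · rintro rfl
        exact ⟨0, by rw [hopfOsc, hup0, hlow0]; norm_num, (map_zero μ).symm⟩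
    have hBset : {r : ℝ | ∃ x : X, thompsonNorm C 0 x ≤ 1 ∧ r = μ x} = {0} := by
      ext r
      simp only [Set.mem_setOf_eq, Set.mem_singleton_iff]
      constructor
      · rintro ⟨x, _, rfl⟩
        rw [hzero x, map_zero]
      · rintro rfl
        exact ⟨0, by rw [thompsonNorm, hup0, hlow0]; norm_num, (map_zero μ).symm⟩
    rw [hAset, dualTNorm, hBset, csSup_singleton]
    norm_num
  · -- main case
    have heC : e ∈ C := interior_subset he
    obtain ⟨K, hK, hnorm⟩ := hnormal
    set Bs : Set ℝ := {r : ℝ | ∃ x : X, thompsonNorm C e x ≤ 1 ∧ r = μ x} with hBs_def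
    have hT0 : thompsonNorm C e (0:X) ≤ 1 := by
      rw [thompsonNorm, upSlope_zero hC he he0, lowSlope_zero hC he he0]
      norm_num
    have hBne : Bs.Nonempty := ⟨0, 0, hT0, (map_zero μ).symm⟩
    have hBbdd : BddAbove Bs := by
      refine ⟨‖μ‖ * ((2 * K + 1) * ‖e‖), ?_⟩
      rintro r ⟨z, hz, rfl⟩
      have huz : upSlope C e z ≤ 1 := le_trans (le_max_left _ _) hz
      have hlz : -(lowSlope C e z) ≤ 1 := le_trans (le_max_right _ _) hz
      have hlu : lowSlope C e z ≤ upSlope C e z := lowSlope_le_upSlope hC he he0 z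
      have hy : z - (lowSlope C e z) • e ∈ C := lowSlope_mem hC he he0 z
      have hyx : (upSlope C e z - lowSlope C e z) • e - (z - (lowSlope C e z) • e) ∈ C := by
        have h1 := upSlope_mem hC he he0 z
        have : (upSlope C e z - lowSlope C e z) • e - (z - (lowSlope C e z) • e)
            = (upSlope C e z) • e - z := by
          rw [sub_smul]; abel
        rw [this]; exact h1
      have hbound := hnorm _ _ hy hyx
      have hnormsmul : ‖(upSlope C e z - lowSlope C e z) • e‖
          = (upSlope C e z - lowSlope C e z) * ‖e‖ := by
        rw [norm_smul, Real.norm_eq_abs, abs_of_nonneg (by linarith)]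
      have hyb : ‖z - (lowSlope C e z) • e‖ ≤ K * (2 * ‖e‖) := by
        refine le_trans hbound ?_
        rw [hnormsmul]
        have h4 : upSlope C e z - lowSlope C e z ≤ 2 := by linarith
        exact mul_le_mul_of_nonneg_left
          (mul_le_mul_of_nonneg_right h4 (norm_nonneg e)) hK.le
      have hzb : ‖z‖ ≤ (2 * K + 1) * ‖e‖ := by
        have h1 : ‖z‖ ≤ ‖z - (lowSlope C e z) • e‖ + ‖(lowSlope C e z) • e‖ := by
          have := norm_add_le (z - (lowSlope C e z) • e) ((lowSlope C e z) • e)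
          simpa using this
        have h2 : ‖(lowSlope C e z) • e‖ ≤ 1 * ‖e‖ := by
          rw [norm_smul, Real.norm_eq_abs]
          have : |lowSlope C e z| ≤ 1 := abs_le.mpr ⟨by linarith, by linarith⟩
          nlinarith [norm_nonneg e]
        nlinarith [norm_nonneg e]
      calc μ z ≤ |μ z| := le_abs_self _
        _ = ‖μ z‖ := rfl
        _ ≤ ‖μ‖ * ‖z‖ := μ.le_opNorm z
        _ ≤ ‖μ‖ * ((2 * K + 1) * ‖e‖) := by nlinarith [norm_nonneg μ]
    have hset : {r : ℝ | ∃ x : X, hopfOsc C e x ≤ 1 ∧ r = μ x} = {r : ℝ | 2 * r + 0 ∈ Bs} := by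
      ext r
      simp only [Set.mem_setOf_eq, add_zero]
      constructor
      · rintro ⟨x, hx, rfl⟩
        rw [hopfOsc] at hx
        refine ⟨(2:ℝ) • x - (upSlope C e x + lowSlope C e x) • e, ?_, ?_⟩
        · rw [thompsonNorm, upSlope_sub_smul hC he he0, lowSlope_sub_smul hC he he0,
            upSlope_smul hC he he0 x two_pos, lowSlope_smul hC he he0 x two_pos]
          rw [max_le_iff]
          constructor <;> linarith
        · rw [map_sub, map_smul, map_smul, hμ, smul_eq_mul, smul_eq_mul]
          ring
      · rintro ⟨z, hz, h2r⟩
        have huz : upSlope C e z ≤ 1 := le_trans (le_max_left _ _) hz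
        have hlz : -(lowSlope C e z) ≤ 1 := le_trans (le_max_right _ _) hz
        refine ⟨(2:ℝ)⁻¹ • z, ?_, ?_⟩
        · rw [hopfOsc, upSlope_smul hC he he0 z (by norm_num : (0:ℝ) < 2⁻¹),
            lowSlope_smul hC he he0 z (by norm_num : (0:ℝ) < 2⁻¹)]
          linarith
        · rw [map_smul, smul_eq_mul]
          linarith
    rw [hset, real_sSup_affine hBne hBbdd two_pos 0]
    rw [dualTNorm, ← hBs_def]
    ring
end

section
/- For ν, π ∈ P(e), the following are equivalent: (a) ν ⊥ π; (b) the only elements ρ, σ ∈ P(e) satisfying ν − π = ρ − σ are ρ = ν and σ = π. -/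
theorem disjoint_iff_unique_decomposition
    {X : Type*} [NormedAddCommGroup X] [NormedSpace ℝ X] [CompleteSpace X]
    (C : Set X) (e : X) (hC : IsCPCone C) (hnormal : IsNormalCone C)
    (he : e ∈ interior C) (ν π : X →L[ℝ] ℝ)
    (hν : ν ∈ simplexSet C e) (hπ : π ∈ simplexSet C e) :
    disjointIn C e ν π ↔
      ∀ ρ ∈ simplexSet C e, ∀ σ ∈ simplexSet C e, ν - π = ρ - σ → ρ = ν ∧ σ = π := by
  obtain ⟨hνC, hνe⟩ := hν
  obtain ⟨hπC, hπe⟩ := hπ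
  constructor
  · intro hd ρ hρ σ hσ heq
    obtain ⟨hρC, hρe⟩ := hρ
    obtain ⟨hσC, hσe⟩ := hσ
    have heq' : ∀ x : X, ν x - π x = ρ x - σ x := by
      intro x
      have := congrArg (fun f : X →L[ℝ] ℝ => f x) heq
      simpa using this
    set μ : X →L[ℝ] ℝ := (2:ℝ)⁻¹ • (ν + σ) with hμdef
    have hμmem : μ ∈ simplexSet C e := by
      constructor
      · intro x hx
        have h1 := hνC x hx
        have h2 := hσC x hx
        simp only [hμdef, ContinuousLinearMap.smul_apply, ContinuousLinearMap.add_apply,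
          smul_eq_mul]
        positivity
      · simp only [hμdef, ContinuousLinearMap.smul_apply, ContinuousLinearMap.add_apply,
          smul_eq_mul, hνe, hσe]
        norm_num
    have hk1 : μ - (2:ℝ)⁻¹ • ν ∈ dualCone C := by
      intro x hx
      have h2 := hσC x hx
      simp only [hμdef, ContinuousLinearMap.sub_apply, ContinuousLinearMap.smul_apply,
        ContinuousLinearMap.add_apply, smul_eq_mul]
      linarith
    have hk2 : μ - (2:ℝ)⁻¹ • π ∈ dualCone C := by
      intro x hx
      have h2 := hρC x hx
      have h3 := heq' x
      simp only [hμdef, ContinuousLinearMap.sub_apply, ContinuousLinearMap.smul_apply,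
        ContinuousLinearMap.add_apply, smul_eq_mul]
      linarith
    have hfin := hd μ hμmem hk1 hk2
    have hval : ∀ x : X, μ x = (2:ℝ)⁻¹ * ν x + (2:ℝ)⁻¹ * π x := by
      intro x
      have := congrArg (fun f : X →L[ℝ] ℝ => f x) hfin
      simpa using this
    have hσπ : σ = π := by
      ext x
      have h1 := hval x
      simp only [hμdef, ContinuousLinearMap.smul_apply, ContinuousLinearMap.add_apply,
        smul_eq_mul] at h1
      linarith
    refine ⟨?_, hσπ⟩
    ext x
    have h3 := heq' x
    have h4 := congrArg (fun f : X →L[ℝ] ℝ => f x) hσπ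
    linarith
  · intro huniq μ hμ h1 h2
    obtain ⟨hμC, hμe⟩ := hμ
    set ρ : X →L[ℝ] ℝ := (2:ℝ) • μ - π with hρdef
    set σ : X →L[ℝ] ℝ := (2:ℝ) • μ - ν with hσdef
    have hρmem : ρ ∈ simplexSet C e := by
      constructor
      · intro x hx
        have := h2 x hx
        simp only [hρdef, ContinuousLinearMap.sub_apply, ContinuousLinearMap.smul_apply,
          smul_eq_mul] at this ⊢
        linarith
      · simp only [hρdef, ContinuousLinearMap.sub_apply, ContinuousLinearMap.smul_apply,
          smul_eq_mul, hμe, hπe]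
        norm_num
    have hσmem : σ ∈ simplexSet C e := by
      constructor
      · intro x hx
        have := h1 x hx
        simp only [hσdef, ContinuousLinearMap.sub_apply, ContinuousLinearMap.smul_apply,
          smul_eq_mul] at this ⊢
        linarith
      · simp only [hσdef, ContinuousLinearMap.sub_apply, ContinuousLinearMap.smul_apply,
          smul_eq_mul, hμe, hνe]
        norm_num
    have heq : ν - π = ρ - σ := by
      ext x
      simp only [hρdef, hσdef, ContinuousLinearMap.sub_apply, ContinuousLinearMap.smul_apply,
        smul_eq_mul]
      ring
    obtain ⟨hρν, -⟩ := huniq ρ hρmem σ hσmem heq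
    ext x
    have := congrArg (fun f : X →L[ℝ] ℝ => f x) hρν
    simp only [hρdef, ContinuousLinearMap.sub_apply, ContinuousLinearMap.smul_apply,
      ContinuousLinearMap.add_apply, smul_eq_mul] at this ⊢
    linarith
end

section
/- Let T : X₁ → X₂ be a bounded linear map such that T(e₁) ∈ ℝe₂. Then the operator norm of T with respect to the Hopf oscillation seminorms, ‖T‖_H = sup{‖T(z)‖_{H} : z ∈ X₁, ‖z‖_{H} ≤ 1}, satisfies ‖T‖_H = (1/2) sup_{ν,π ∈ P(e₂)} ‖T⋆(ν) − T⋆(π)‖_T⋆ = sup_{ν,π ∈ P(e₂)} sup_{x ∈ [0,e₁]} ⟨ν − π, T(x)⟩, where T⋆ is the adjoint of T. Moreover, the suprema over ν, π may be restricted to pairs of extreme points of P(e₂) that are disjoint: ‖T‖_H = (1/2) sup{‖T⋆(ν) − T⋆(π)‖_T⋆ : ν, π extreme in P(e₂), ν ⊥ π} = sup{sup_{x ∈ [0,e₁]} ⟨ν − π, T(x)⟩ : ν, π extreme in P(e₂), ν ⊥ π}. -/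
set_option linter.unusedSectionVars false
namespace DobrushinAux

open Set

variable {X : Type*} [NormedAddCommGroup X] [NormedSpace ℝ X] {C : Set X} {e : X}

theorem cone_convex (hC : IsCPCone C) : Convex ℝ C := fun x hx y hy a b ha hb _ =>
  hC.2.1 _ (hC.2.2.1 a ha x hx) _ (hC.2.2.1 b hb y hy)

theorem zero_mem (hC : IsCPCone C) (he : e ∈ interior C) : (0 : X) ∈ C := by
  have := hC.2.2.1 0 le_rfl e (interior_subset he)
  simpa using this

theorem exists_ball_subset (he : e ∈ interior C) : ∃ ε > (0:ℝ), ∀ w : X, ‖w‖ < ε → e + w ∈ C := by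
  rcases Metric.mem_nhds_iff.1 (mem_interior_iff_mem_nhds.1 he) with ⟨ε, hε, hball⟩
  refine ⟨ε, hε, fun w hw => hball ?_⟩
  simpa [Metric.mem_ball, dist_eq_norm] using hw

theorem arch_up (hC : IsCPCone C) (he : e ∈ interior C) (y : X) :
    ∃ t : ℝ, 0 < t ∧ t • e - y ∈ C := by
  obtain ⟨ε, hε, hball⟩ := exists_ball_subset he
  have ht0 : 0 < (‖y‖ + ε) / ε := by positivity
  refine ⟨(‖y‖ + ε) / ε, ht0, ?_⟩
  set t := (‖y‖ + ε) / ε with ht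
  have hsmall : ‖-(t⁻¹ • y)‖ < ε := by
    rw [norm_neg, norm_smul, Real.norm_eq_abs, abs_inv, abs_of_pos ht0]
    rw [inv_mul_lt_iff₀ ht0, ht, div_mul_cancel₀ _ hε.ne']
    linarith [norm_nonneg y]
  have h1 : e + -(t⁻¹ • y) ∈ C := hball _ hsmall
  have h2 := hC.2.2.1 t ht0.le _ h1
  rw [smul_add, smul_neg, smul_inv_smul₀ ht0.ne'] at h2
  simpa [sub_eq_add_neg] using h2

theorem arch_low (hC : IsCPCone C) (he : e ∈ interior C) (y : X) :
    ∃ t : ℝ, y - t • e ∈ C := by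
  obtain ⟨t, _, h⟩ := arch_up hC he (-y)
  refine ⟨-t, ?_⟩
  have : t • e - -y = y - (-t) • e := by module
  rwa [this] at h

theorem smul_e_nonneg (hC : IsCPCone C) (he : e ∈ interior C) (he0 : e ≠ 0) {t : ℝ}
    (h : t • e ∈ C) : 0 ≤ t := by
  by_contra hneg
  push_neg at hneg
  have h2 : -(t • e) ∈ C := by
    have := hC.2.2.1 (-t) (by linarith) e (interior_subset he)
    simpa [neg_smul] using this
  have := hC.2.2.2 _ h h2
  rcases smul_eq_zero.1 this with h | h
  · exact hneg.ne h
  · exact he0 h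

theorem bddBelow_upSet (hC : IsCPCone C) (he : e ∈ interior C) (he0 : e ≠ 0) (x : X) :
    BddBelow {t : ℝ | t • e - x ∈ C} := by
  obtain ⟨t₀, ht₀⟩ := arch_low hC he x
  refine ⟨t₀, fun t ht => ?_⟩
  have h : (t - t₀) • e ∈ C := by
    have := hC.2.1 _ ht _ ht₀
    have heq : t • e - x + (x - t₀ • e) = (t - t₀) • e := by module
    rwa [heq] at this
  have := smul_e_nonneg hC he he0 h
  linarith

theorem bddAbove_lowSet (hC : IsCPCone C) (he : e ∈ interior C) (he0 : e ≠ 0) (x : X) :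
    BddAbove {t : ℝ | x - t • e ∈ C} := by
  obtain ⟨t₁, _, ht₁⟩ := arch_up hC he x
  refine ⟨t₁, fun t ht => ?_⟩
  have h : (t₁ - t) • e ∈ C := by
    have := hC.2.1 _ ht₁ _ ht
    have heq : t₁ • e - x + (x - t • e) = (t₁ - t) • e := by module
    rwa [heq] at this
  have := smul_e_nonneg hC he he0 h
  linarith

theorem upSet_nonempty (hC : IsCPCone C) (he : e ∈ interior C) (x : X) :
    {t : ℝ | t • e - x ∈ C}.Nonempty := by
  obtain ⟨t, _, ht⟩ := arch_up hC he x; exact ⟨t, ht⟩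

theorem lowSet_nonempty (hC : IsCPCone C) (he : e ∈ interior C) (x : X) :
    {t : ℝ | x - t • e ∈ C}.Nonempty := arch_low hC he x

theorem upSlope_mem (hC : IsCPCone C) (he : e ∈ interior C) (he0 : e ≠ 0) (x : X) :
    upSlope C e x • e - x ∈ C := by
  have hcl : IsClosed {t : ℝ | t • e - x ∈ C} :=
    hC.1.preimage (by continuity : Continuous fun t : ℝ => t • e - x)
  exact hcl.csInf_mem (upSet_nonempty hC he x) (bddBelow_upSet hC he he0 x)

theorem lowSlope_mem (hC : IsCPCone C) (he : e ∈ interior C) (he0 : e ≠ 0) (x : X) :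
    x - lowSlope C e x • e ∈ C := by
  have hcl : IsClosed {t : ℝ | x - t • e ∈ C} :=
    hC.1.preimage (by continuity : Continuous fun t : ℝ => x - t • e)
  exact hcl.csSup_mem (lowSet_nonempty hC he x) (bddAbove_lowSet hC he he0 x)

theorem upSlope_le (hC : IsCPCone C) (he : e ∈ interior C) (he0 : e ≠ 0) {x : X} {t : ℝ}
    (h : t • e - x ∈ C) : upSlope C e x ≤ t :=
  csInf_le (bddBelow_upSet hC he he0 x) h

theorem le_lowSlope (hC : IsCPCone C) (he : e ∈ interior C) (he0 : e ≠ 0) {x : X} {t : ℝ}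
    (h : x - t • e ∈ C) : t ≤ lowSlope C e x :=
  le_csSup (bddAbove_lowSet hC he he0 x) h

theorem lowSlope_le_upSlope (hC : IsCPCone C) (he : e ∈ interior C) (he0 : e ≠ 0) (x : X) :
    lowSlope C e x ≤ upSlope C e x := by
  have h := hC.2.1 _ (upSlope_mem hC he he0 x) _ (lowSlope_mem hC he he0 x)
  have heq : upSlope C e x • e - x + (x - lowSlope C e x • e)
      = (upSlope C e x - lowSlope C e x) • e := by module
  rw [heq] at h
  have := smul_e_nonneg hC he he0 h
  linarith

end DobrushinAux
namespace DobrushinAux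

open Set

variable {X : Type*} [NormedAddCommGroup X] [NormedSpace ℝ X] {C : Set X} {e : X}

theorem simplex_le_upSlope (hC : IsCPCone C) (he : e ∈ interior C) {ν : X →L[ℝ] ℝ}
    (hν : ν ∈ simplexSet C e) (x : X) : ν x ≤ upSlope C e x := by
  refine le_csInf (upSet_nonempty hC he x) fun t ht => ?_
  have h0 := hν.1 _ ht
  rw [map_sub, map_smul, hν.2] at h0
  simpa using h0

theorem lowSlope_le_simplex (hC : IsCPCone C) (he : e ∈ interior C) {ν : X →L[ℝ] ℝ}
    (hν : ν ∈ simplexSet C e) (x : X) : lowSlope C e x ≤ ν x := by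
  refine csSup_le (lowSet_nonempty hC he x) fun t ht => ?_
  have h0 := hν.1 _ ht
  rw [map_sub, map_smul, hν.2] at h0
  simpa using h0

theorem exists_pos_functional (hC : IsCPCone C) (he : e ∈ interior C) {p : X} (hp : p ∉ C) :
    ∃ f : X →L[ℝ] ℝ, (∀ x ∈ C, 0 ≤ f x) ∧ f p < 0 := by
  obtain ⟨f, u, hfu, hC'⟩ := geometric_hahn_banach_point_closed (cone_convex hC) hC.1 hp
  have hu0 : u < 0 := by simpa using hC' 0 (zero_mem hC he)
  have hpos : ∀ x ∈ C, 0 ≤ f x := by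
    intro x hx
    by_contra hneg
    push_neg at hneg
    have ht : 0 ≤ u / f x := div_nonneg_of_nonpos hu0.le hneg.le
    have hmem := hC.2.2.1 _ ht x hx
    have := hC' _ hmem
    rw [map_smul] at this
    have : u < u / f x * f x := this
    rw [div_mul_cancel₀ _ hneg.ne] at this
    exact lt_irrefl _ this
  exact ⟨f, hpos, hfu.trans hu0⟩

theorem pos_functional_pos_at_unit (hC : IsCPCone C) (he : e ∈ interior C)
    {f : X →L[ℝ] ℝ} (hf : ∀ x ∈ C, 0 ≤ f x) (hfne : ∃ q, f q < 0 ∨ 0 < f q) : 0 < f e := by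
  rcases lt_or_eq_of_le (hf e (interior_subset he)) with h | h
  · exact h
  · exfalso
    obtain ⟨ε, hε, hball⟩ := exists_ball_subset he
    have hzero : ∀ w : X, f w = 0 := by
      have hnn : ∀ w : X, 0 ≤ f w := by
        intro w
        have hs : 0 < ε / (2 * (‖w‖ + 1)) := by positivity
        have hmem : e + (ε / (2 * (‖w‖ + 1))) • w ∈ C := by
          apply hball
          rw [norm_smul, Real.norm_eq_abs, abs_of_pos hs]
          rw [div_mul_eq_mul_div, div_lt_iff₀ (by positivity)]
          nlinarith [norm_nonneg w]
        have := hf _ hmem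
        rw [map_add, map_smul, ← h] at this
        simp only [smul_eq_mul, zero_add] at this
        nlinarith
      intro w
      have h1 := hnn w
      have h2 := hnn (-w)
      rw [map_neg] at h2
      linarith
    obtain ⟨q, hq⟩ := hfne
    rcases hq with hq | hq <;> rw [hzero q] at hq <;> linarith

theorem exists_simplex_of_notMem (hC : IsCPCone C) (he : e ∈ interior C) {p : X} (hp : p ∉ C) :
    ∃ ν ∈ simplexSet C e, ν p < 0 := by
  obtain ⟨f, hf, hfp⟩ := exists_pos_functional hC he hp
  have hfe : 0 < f e := pos_functional_pos_at_unit hC he hf ⟨p, Or.inl hfp⟩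
  refine ⟨(f e)⁻¹ • f, ⟨fun x hx => ?_, ?_⟩, ?_⟩
  · have := hf x hx
    simp only [ContinuousLinearMap.smul_apply, smul_eq_mul]
    positivity
  · simp only [ContinuousLinearMap.smul_apply, smul_eq_mul]
    exact inv_mul_cancel₀ hfe.ne'
  · simp only [ContinuousLinearMap.smul_apply, smul_eq_mul]
    exact mul_neg_of_pos_of_neg (by positivity) hfp

theorem simplex_nonempty (hC : IsCPCone C) (he : e ∈ interior C) (he0 : e ≠ 0) :
    (simplexSet C e).Nonempty := by
  have hp : -e ∉ C := by
    intro hmem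
    exact he0 (hC.2.2.2 e (interior_subset he) hmem)
  obtain ⟨ν, hν, _⟩ := exists_simplex_of_notMem hC he hp
  exact ⟨ν, hν⟩

theorem exists_simplex_gt (hC : IsCPCone C) (he : e ∈ interior C) (he0 : e ≠ 0) (y : X)
    {ε : ℝ} (hε : 0 < ε) : ∃ ν ∈ simplexSet C e, upSlope C e y - ε < ν y := by
  have hp : (upSlope C e y - ε) • e - y ∉ C := by
    intro hmem
    have := upSlope_le hC he he0 hmem
    linarith
  obtain ⟨ν, hν, hνp⟩ := exists_simplex_of_notMem hC he hp
  refine ⟨ν, hν, ?_⟩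
  rw [map_sub, map_smul, hν.2] at hνp
  simp only [smul_eq_mul, mul_one] at hνp
  linarith

theorem exists_simplex_lt (hC : IsCPCone C) (he : e ∈ interior C) (he0 : e ≠ 0) (y : X)
    {ε : ℝ} (hε : 0 < ε) : ∃ π ∈ simplexSet C e, π y < lowSlope C e y + ε := by
  have hp : y - (lowSlope C e y + ε) • e ∉ C := by
    intro hmem
    have := le_lowSlope hC he he0 hmem
    linarith
  obtain ⟨π, hπ, hπp⟩ := exists_simplex_of_notMem hC he hp
  refine ⟨π, hπ, ?_⟩
  rw [map_sub, map_smul, hπ.2] at hπp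
  simp only [smul_eq_mul, mul_one] at hπp
  linarith

theorem simplex_bound (hC : IsCPCone C) (he : e ∈ interior C) :
    ∃ B > (0:ℝ), ∀ ν ∈ simplexSet C e, ∀ y : X, |ν y| ≤ B * ‖y‖ := by
  obtain ⟨ε, hε, hball⟩ := exists_ball_subset he
  refine ⟨4 / ε, by positivity, fun ν hν y => ?_⟩
  have key : ∀ w : X, ‖w‖ < ε → |ν w| ≤ 1 := by
    intro w hw
    have h1 : 0 ≤ 1 + ν w := by
      have := hν.1 _ (hball w hw)
      rw [map_add, hν.2] at this
      linarith
    have h2 : 0 ≤ 1 - ν w := by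
      have := hν.1 _ (hball (-w) (by simpa using hw))
      rw [map_add, hν.2, map_neg] at this
      linarith
    rw [abs_le]; constructor <;> linarith
  rcases eq_or_ne y 0 with rfl | hy
  · simp
  · have hny : 0 < ‖y‖ := norm_pos_iff.2 hy
    have hs : 0 < ε / (2 * ‖y‖) := by positivity
    have hw : ‖(ε / (2 * ‖y‖)) • y‖ < ε := by
      rw [norm_smul, Real.norm_eq_abs, abs_of_pos hs, div_mul_eq_mul_div,
        div_lt_iff₀ (by positivity)]
      nlinarith
    have := key _ hw
    rw [map_smul, smul_eq_mul, abs_mul, abs_of_pos hs] at this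
    have h4 : ε * |ν y| ≤ 2 * ‖y‖ := by
      rw [div_mul_eq_mul_div, div_le_one (by positivity)] at this
      linarith
    rw [div_mul_eq_mul_div, le_div_iff₀ hε]
    nlinarith [abs_nonneg (ν y)]
  
end DobrushinAux
namespace DobrushinAux

open Set

variable {X : Type*} [NormedAddCommGroup X] [NormedSpace ℝ X] {C : Set X} {e : X}

theorem orderIntv_slopes (hC : IsCPCone C) (he : e ∈ interior C) (he0 : e ≠ 0) {x : X}
    (hx : x ∈ orderIntv C e) : upSlope C e x ≤ 1 ∧ 0 ≤ lowSlope C e x := by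
  constructor
  · apply upSlope_le hC he he0
    rw [one_smul]; exact hx.2
  · apply le_lowSlope hC he he0
    rw [zero_smul, sub_zero]; exact hx.1

theorem hopfOsc_le_one_of_orderIntv (hC : IsCPCone C) (he : e ∈ interior C) (he0 : e ≠ 0)
    {x : X} (hx : x ∈ orderIntv C e) : hopfOsc C e x ≤ 1 := by
  obtain ⟨h1, h2⟩ := orderIntv_slopes hC he he0 hx
  unfold hopfOsc; linarith

theorem zero_mem_orderIntv (hC : IsCPCone C) (he : e ∈ interior C) : (0:X) ∈ orderIntv C e :=
  ⟨zero_mem hC he, by simpa using interior_subset he⟩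

theorem upSlope_zero (hC : IsCPCone C) (he : e ∈ interior C) (he0 : e ≠ 0) :
    upSlope C e (0:X) = 0 := by
  apply le_antisymm
  · apply upSlope_le hC he he0; simp [zero_mem hC he]
  · refine le_csInf (upSet_nonempty hC he 0) fun t ht => ?_
    exact smul_e_nonneg hC he he0 (by simpa using ht)

theorem lowSlope_zero (hC : IsCPCone C) (he : e ∈ interior C) (he0 : e ≠ 0) :
    lowSlope C e (0:X) = 0 := by
  apply le_antisymm
  · refine csSup_le (lowSet_nonempty hC he 0) fun t ht => ?_
    have : (-t) • e ∈ C := by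
      have : (0:X) - t • e = (-t) • e := by module
      rw [← this]; exact ht
    have := smul_e_nonneg hC he he0 this
    linarith
  · apply le_lowSlope hC he he0; simp [zero_mem hC he]

theorem all_zero_of_zero_interior (hC : IsCPCone C) (h0 : (0:X) ∈ interior C) (v : X) :
    v = 0 := by
  obtain ⟨ε, hε, hball⟩ := exists_ball_subset h0
  simp only [zero_add] at hball
  have key : ∀ w : X, ‖w‖ < ε → w = 0 := by
    intro w hw
    exact hC.2.2.2 w (hball w hw) (hball (-w) (by simpa using hw))
  have hs : 0 < ε / (2 * (‖v‖ + 1)) := by positivity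
  have hsm : ‖(ε / (2 * (‖v‖ + 1))) • v‖ < ε := by
    rw [norm_smul, Real.norm_eq_abs, abs_of_pos hs, div_mul_eq_mul_div,
      div_lt_iff₀ (by positivity)]
    nlinarith [norm_nonneg v]
  have := key _ hsm
  rcases smul_eq_zero.1 this with h | h
  · exact absurd h hs.ne'
  · exact h

theorem sInf_univ_real : sInf (univ : Set ℝ) = 0 := by
  have : ¬BddBelow (univ : Set ℝ) := by
    rintro ⟨b, hb⟩
    have := hb (mem_univ (b - 1))
    linarith
  rw [Real.sInf_of_not_bddBelow this]

theorem sSup_univ_real : sSup (univ : Set ℝ) = 0 := by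
  have : ¬BddAbove (univ : Set ℝ) := by
    rintro ⟨b, hb⟩
    have := hb (mem_univ (b + 1))
    linarith
  rw [Real.sSup_of_not_bddAbove this]

theorem hopfOsc_zero (hC : IsCPCone C) (he : e ∈ interior C) : hopfOsc C e (0:X) = 0 := by
  rcases eq_or_ne e 0 with rfl | he0
  · unfold hopfOsc upSlope lowSlope
    have h1 : {t : ℝ | t • (0:X) - 0 ∈ C} = univ := by
      ext t; simp [zero_mem hC he]
    have h2 : {t : ℝ | (0:X) - t • (0:X) ∈ C} = univ := by
      ext t; simp [zero_mem hC he]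
    rw [h1, h2, sInf_univ_real, sSup_univ_real, sub_zero]
  · unfold hopfOsc
    rw [upSlope_zero hC he he0, lowSlope_zero hC he he0, sub_zero]

theorem thompson_le_one_iff (hC : IsCPCone C) (he : e ∈ interior C) (he0 : e ≠ 0) (x : X) :
    thompsonNorm C e x ≤ 1 ↔ (e - x ∈ C ∧ e + x ∈ C) := by
  constructor
  · intro h
    rw [thompsonNorm, max_le_iff] at h
    obtain ⟨h1, h2⟩ := h
    constructor
    · have hm := upSlope_mem hC he he0 x
      have := hC.2.1 _ (hC.2.2.1 (1 - upSlope C e x) (by linarith) e (interior_subset he)) _ hm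
      have heq : (1 - upSlope C e x) • e + (upSlope C e x • e - x) = e - x := by module
      rwa [heq] at this
    · have hm := lowSlope_mem hC he he0 x
      have := hC.2.1 _ hm _
        (hC.2.2.1 (lowSlope C e x + 1) (by linarith) e (interior_subset he))
      have heq : x - lowSlope C e x • e + (lowSlope C e x + 1) • e = e + x := by module
      rwa [heq] at this
  · rintro ⟨h1, h2⟩
    rw [thompsonNorm, max_le_iff]
    constructor
    · apply upSlope_le hC he he0; rw [one_smul]; exact h1
    · have : -1 ≤ lowSlope C e x := by
        apply le_lowSlope hC he he0
        have : x - (-1:ℝ) • e = e + x := by module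
        rw [this]; exact h2
      linarith

end DobrushinAux
namespace DobrushinAux

open Set

theorem sSup_double {α : Type*} (A : Set α) (g : α → ℝ) :
    sSup {r : ℝ | ∃ a ∈ A, r = 2 * g a} = 2 * sSup {r : ℝ | ∃ a ∈ A, r = g a} := by
  rcases A.eq_empty_or_nonempty with rfl | ⟨a₀, ha₀⟩
  · simp [Real.sSup_empty]
  set S : Set ℝ := {r | ∃ a ∈ A, r = g a} with hS
  set S₂ : Set ℝ := {r | ∃ a ∈ A, r = 2 * g a} with hS₂
  have hSne : S.Nonempty := ⟨g a₀, a₀, ha₀, rfl⟩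
  have hS₂ne : S₂.Nonempty := ⟨2 * g a₀, a₀, ha₀, rfl⟩
  by_cases hbdd : BddAbove S
  · obtain ⟨b, hb⟩ := hbdd
    have hbdd₂ : BddAbove S₂ := by
      refine ⟨2 * b, ?_⟩
      rintro r ⟨a, ha, rfl⟩
      have := hb ⟨a, ha, rfl⟩
      linarith
    apply le_antisymm
    · refine csSup_le hS₂ne ?_
      rintro r ⟨a, ha, rfl⟩
      have : g a ≤ sSup S := le_csSup ⟨b, hb⟩ ⟨a, ha, rfl⟩
      linarith
    · have : sSup S ≤ sSup S₂ / 2 := by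
        refine csSup_le hSne ?_
        rintro r ⟨a, ha, rfl⟩
        have : 2 * g a ≤ sSup S₂ := le_csSup hbdd₂ ⟨a, ha, rfl⟩
        linarith
      linarith
  · have hbdd₂ : ¬BddAbove S₂ := by
      rintro ⟨b, hb⟩
      refine hbdd ⟨b / 2, ?_⟩
      rintro r ⟨a, ha, rfl⟩
      have := hb ⟨a, ha, rfl⟩
      linarith
    rw [Real.sSup_of_not_bddAbove hbdd, Real.sSup_of_not_bddAbove hbdd₂]
    ring

theorem sSup_sSup {α : Type*} (A : Set α) (S : α → Set ℝ) (B : ℝ)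
    (hne : ∀ a ∈ A, (S a).Nonempty) (hbd : ∀ a ∈ A, ∀ r ∈ S a, r ≤ B) :
    sSup {r : ℝ | ∃ a ∈ A, r ∈ S a} = sSup {r : ℝ | ∃ a ∈ A, r = sSup (S a)} := by
  rcases A.eq_empty_or_nonempty with rfl | ⟨a₀, ha₀⟩
  · simp
  set U : Set ℝ := {r | ∃ a ∈ A, r ∈ S a} with hU
  set V : Set ℝ := {r | ∃ a ∈ A, r = sSup (S a)} with hV
  have hUbd : BddAbove U := ⟨B, by rintro r ⟨a, ha, hr⟩; exact hbd a ha r hr⟩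
  have hVbd : BddAbove V := by
    refine ⟨B, ?_⟩
    rintro r ⟨a, ha, rfl⟩
    exact csSup_le (hne a ha) (hbd a ha)
  obtain ⟨r₀, hr₀⟩ := hne a₀ ha₀
  apply le_antisymm
  · refine csSup_le ⟨r₀, a₀, ha₀, hr₀⟩ ?_
    rintro r ⟨a, ha, hr⟩
    calc r ≤ sSup (S a) := le_csSup ⟨B, hbd a ha⟩ hr
    _ ≤ sSup V := le_csSup hVbd ⟨a, ha, rfl⟩
  · refine csSup_le ⟨sSup (S a₀), a₀, ha₀, rfl⟩ ?_
    rintro r ⟨a, ha, rfl⟩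
    refine csSup_le (hne a ha) fun r' hr' => le_csSup hUbd ⟨a, ha, hr'⟩

variable {X : Type*} [NormedAddCommGroup X] [NormedSpace ℝ X] {C : Set X} {e : X}

theorem dualTNorm_eq (hC : IsCPCone C) (he : e ∈ interior C) (he0 : e ≠ 0)
    {μ : X →L[ℝ] ℝ} (hμ : μ e = 0) :
    dualTNorm C e μ = 2 * sSup {r : ℝ | ∃ x ∈ orderIntv C e, r = μ x} := by
  have hsets : {r : ℝ | ∃ x : X, thompsonNorm C e x ≤ 1 ∧ r = μ x}
      = {r : ℝ | ∃ x ∈ orderIntv C e, r = 2 * μ x} := by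
    ext r
    constructor
    · rintro ⟨x, hx, rfl⟩
      rw [thompson_le_one_iff hC he he0] at hx
      refine ⟨(2:ℝ)⁻¹ • (x + e), ⟨?_, ?_⟩, ?_⟩
      · exact hC.2.2.1 _ (by norm_num) _ (by simpa [add_comm] using hx.2)
      · have heq : e - (2:ℝ)⁻¹ • (x + e) = (2:ℝ)⁻¹ • (e - x) := by module
        rw [heq]
        exact hC.2.2.1 _ (by norm_num) _ hx.1
      · rw [map_smul]
        have h5 : μ (x + e) = μ x := by rw [map_add, hμ, add_zero]
        rw [h5, smul_eq_mul]
        ring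
    · rintro ⟨y, hy, rfl⟩
      refine ⟨(2:ℝ) • y - e, ?_, ?_⟩
      · rw [thompson_le_one_iff hC he he0]
        constructor
        · have heq : e - ((2:ℝ) • y - e) = (2:ℝ) • (e - y) := by module
          rw [heq]
          exact hC.2.2.1 _ (by norm_num) _ hy.2
        · have heq : e + ((2:ℝ) • y - e) = (2:ℝ) • y := by module
          rw [heq]
          exact hC.2.2.1 _ (by norm_num) _ hy.1
      · rw [map_sub, map_smul, hμ]
        simp
  rw [dualTNorm, hsets]
  exact sSup_double (orderIntv C e) (fun x => μ x)

end DobrushinAux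
namespace DobrushinAux

open Set

variable {X : Type*} [NormedAddCommGroup X] [NormedSpace ℝ X] {C : Set X} {e : X}

/-- The set of differences of simplex elements. -/
def diffSet (C : Set X) (e : X) : Set (X →L[ℝ] ℝ) :=
  {μ | ∃ ν ∈ simplexSet C e, ∃ π ∈ simplexSet C e, μ = ν - π}

theorem simplex_convex : Convex ℝ (simplexSet C e) := by
  rintro ν hν π hπ a b ha hb hab
  refine ⟨fun x hx => ?_, ?_⟩
  · have h1 := hν.1 x hx
    have h2 := hπ.1 x hx
    simp only [ContinuousLinearMap.add_apply, ContinuousLinearMap.coe_smul',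
      Pi.smul_apply, smul_eq_mul]
    positivity
  · simp only [ContinuousLinearMap.add_apply, ContinuousLinearMap.coe_smul',
      Pi.smul_apply, smul_eq_mul, hν.2, hπ.2]
    linarith

theorem diffSet_convex : Convex ℝ (diffSet C e) := by
  rintro μ₁ ⟨ν₁, hν₁, π₁, hπ₁, rfl⟩ μ₂ ⟨ν₂, hν₂, π₂, hπ₂, rfl⟩ a b ha hb hab
  refine ⟨a • ν₁ + b • ν₂, simplex_convex hν₁ hν₂ ha hb hab,
    a • π₁ + b • π₂, simplex_convex hπ₁ hπ₂ ha hb hab, ?_⟩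
  module

theorem extremePoints_diffSet (hμ : ∀ μ' : X →L[ℝ] ℝ, μ' ∈ diffSet C e →
    True) : True := trivial

/-- Key algebraic lemma: extreme points of the difference set decompose into
disjoint extreme points of the simplex. -/
theorem extreme_diff_decomp {μ : X →L[ℝ] ℝ}
    (hμ : μ ∈ Set.extremePoints ℝ (diffSet C e)) :
    ∃ ν ∈ Set.extremePoints ℝ (simplexSet C e), ∃ π ∈ Set.extremePoints ℝ (simplexSet C e),
      disjointIn C e ν π ∧ μ = ν - π := by
  rw [mem_extremePoints] at hμ
  obtain ⟨⟨ν, hν, π, hπ, rfl⟩, hext⟩ := hμ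
  have hmid : ∀ μ₁ ∈ diffSet C e, ∀ μ₂ ∈ diffSet C e,
      (2:ℝ)⁻¹ • μ₁ + (2:ℝ)⁻¹ • μ₂ = ν - π → μ₁ = ν - π ∧ μ₂ = ν - π := by
    intro μ₁ h₁ μ₂ h₂ heq
    exact hext μ₁ h₁ μ₂ h₂ ⟨(2:ℝ)⁻¹, (2:ℝ)⁻¹, by norm_num, by norm_num, by norm_num, heq⟩
  refine ⟨ν, ?_, π, ?_, ?_, rfl⟩
  · rw [mem_extremePoints]
    refine ⟨hν, fun ν₁ h₁ ν₂ h₂ hseg => ?_⟩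
    obtain ⟨a, b, ha, hb, hab, heq⟩ := hseg
    have hmem : ν - π ∈ openSegment ℝ (ν₁ - π) (ν₂ - π) := by
      refine ⟨a, b, ha, hb, hab, ?_⟩
      have : a • (ν₁ - π) + b • (ν₂ - π) = (a • ν₁ + b • ν₂) - (a + b) • π := by module
      rw [this, heq, hab, one_smul]
    have := hext _ ⟨ν₁, h₁, π, hπ, rfl⟩ _ ⟨ν₂, h₂, π, hπ, rfl⟩ hmem
    constructor
    · have := this.1; rwa [sub_left_inj] at this
    · have := this.2; rwa [sub_left_inj] at this
  · rw [mem_extremePoints]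
    refine ⟨hπ, fun π₁ h₁ π₂ h₂ hseg => ?_⟩
    obtain ⟨a, b, ha, hb, hab, heq⟩ := hseg
    have hmem : ν - π ∈ openSegment ℝ (ν - π₁) (ν - π₂) := by
      refine ⟨a, b, ha, hb, hab, ?_⟩
      have : a • (ν - π₁) + b • (ν - π₂) = (a + b) • ν - (a • π₁ + b • π₂) := by module
      rw [this, heq, hab, one_smul]
    have := hext _ ⟨ν, hν, π₁, h₁, rfl⟩ _ ⟨ν, hν, π₂, h₂, rfl⟩ hmem
    constructor
    · have := this.1; rwa [sub_right_inj] at this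
    · have := this.2; rwa [sub_right_inj] at this
  · -- disjointness
    intro ρ hρ hα hβ
    have h2α : (2:ℝ) • (ρ - (2:ℝ)⁻¹ • ν) ∈ simplexSet C e := by
      refine ⟨fun x hx => ?_, ?_⟩
      · have := hα x hx
        simp only [ContinuousLinearMap.smul_apply, ContinuousLinearMap.sub_apply,
          smul_eq_mul] at this ⊢
        linarith
      · simp only [ContinuousLinearMap.smul_apply, ContinuousLinearMap.sub_apply,
          smul_eq_mul, hρ.2, hν.2]
        norm_num
    have h2β : (2:ℝ) • (ρ - (2:ℝ)⁻¹ • π) ∈ simplexSet C e := by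
      refine ⟨fun x hx => ?_, ?_⟩
      · have := hβ x hx
        simp only [ContinuousLinearMap.smul_apply, ContinuousLinearMap.sub_apply,
          smul_eq_mul] at this ⊢
        linarith
      · simp only [ContinuousLinearMap.smul_apply, ContinuousLinearMap.sub_apply,
          smul_eq_mul, hρ.2, hπ.2]
        norm_num
    have hmem : ν - π ∈ openSegment ℝ (ν - (2:ℝ) • (ρ - (2:ℝ)⁻¹ • ν))
        ((2:ℝ) • (ρ - (2:ℝ)⁻¹ • π) - π) := by
      refine ⟨(2:ℝ)⁻¹, (2:ℝ)⁻¹, by norm_num, by norm_num, by norm_num, ?_⟩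
      module
    have h := (hext _ ⟨ν, hν, _, h2α, rfl⟩ _ ⟨_, h2β, π, hπ, rfl⟩ hmem).1
    have hkey : (2:ℝ) • (ρ - (2:ℝ)⁻¹ • ν) = π := by rwa [sub_right_inj] at h
    rw [← hkey]
    module

end DobrushinAux
namespace DobrushinAux

open Set

variable {X : Type*} [NormedAddCommGroup X] [NormedSpace ℝ X] {C : Set X} {e : X}

/-- The simplex, viewed in the weak-star dual. -/
def simplexW (C : Set X) (e : X) : Set (WeakDual ℝ X) := simplexSet C e

/-- The difference set, viewed in the weak-star dual. -/
def diffSetW (C : Set X) (e : X) : Set (WeakDual ℝ X) := diffSet C e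

theorem simplexW_isCompact (hC : IsCPCone C) (he : e ∈ interior C) :
    IsCompact (simplexW C e) := by
  obtain ⟨B, hB, hbound⟩ := simplex_bound hC he
  apply WeakDual.isCompact_of_bounded_of_closed
  · apply (Metric.isBounded_closedBall (x := (0 : StrongDual ℝ X)) (r := B)).subset
    intro ν hν
    have hν' : ν ∈ simplexSet C e := hν
    rw [Metric.mem_closedBall, dist_zero_right]
    refine ContinuousLinearMap.opNorm_le_bound ν hB.le fun y => ?_
    rw [Real.norm_eq_abs]
    exact hbound ν hν' y
  · have hset : simplexW C e =
        (⋂ x ∈ C, (fun μ : WeakDual ℝ X => μ x) ⁻¹' Ici 0) ∩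
          ((fun μ : WeakDual ℝ X => μ e) ⁻¹' {1}) := by
      ext μ
      simp only [mem_inter_iff, mem_iInter, mem_preimage, mem_Ici, mem_singleton_iff]
      exact Iff.rfl
    rw [hset]
    exact IsClosed.inter
      (isClosed_biInter fun x _ => isClosed_Ici.preimage (WeakDual.eval_continuous x))
      (isClosed_singleton.preimage (WeakDual.eval_continuous e))

theorem diffSetW_isCompact (hC : IsCPCone C) (he : e ∈ interior C) :
    IsCompact (diffSetW C e) := by
  have hP := simplexW_isCompact hC he
  have hset : diffSetW C e =
      (fun p : WeakDual ℝ X × WeakDual ℝ X => p.1 - p.2) '' (simplexW C e ×ˢ simplexW C e) := by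
    ext μ
    constructor
    · rintro ⟨ν, hν, π, hπ, rfl⟩
      exact ⟨(ν, π), ⟨hν, hπ⟩, rfl⟩
    · rintro ⟨⟨ν, π⟩, ⟨hν, hπ⟩, rfl⟩
      exact ⟨ν, hν, π, hπ, rfl⟩
  rw [hset]
  exact (hP.prod hP).image (continuous_fst.sub continuous_snd)

theorem le_on_diffSet (hC : IsCPCone C) (he : e ∈ interior C) {b : ℝ} {v : X}
    (hb : ∀ μ' ∈ Set.extremePoints ℝ (diffSet C e), μ' v ≤ b) :
    ∀ μ ∈ diffSet C e, μ v ≤ b := by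
  intro μ hμ
  letI : LocallyConvexSpace ℝ (WeakDual ℝ X) := WeakBilin.locallyConvexSpace
  have hcomp := diffSetW_isCompact (C := C) (e := e) hC he
  have hconv : Convex ℝ (diffSetW C e) := diffSet_convex
  have hKM := closure_convexHull_extremePoints hcomp hconv
  set G : Set (WeakDual ℝ X) := {ρ | ρ v ≤ b} with hG
  have hGconv : Convex ℝ G := by
    intro ρ₁ h₁ ρ₂ h₂ a c ha hc hac
    have happ : (a • ρ₁ + c • ρ₂) v = a * ρ₁ v + c * ρ₂ v := rfl
    have hb₁ : a * ρ₁ v ≤ a * b := mul_le_mul_of_nonneg_left h₁ ha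
    have hb₂ : c * ρ₂ v ≤ c * b := mul_le_mul_of_nonneg_left h₂ hc
    have hle : (a • ρ₁ + c • ρ₂) v ≤ a * b + c * b := by rw [happ]; linarith
    have : (a • ρ₁ + c • ρ₂) v ≤ b := by
      rw [← add_mul, hac, one_mul] at hle; exact hle
    exact this
  have hGclosed : IsClosed G := isClosed_Iic.preimage (WeakDual.eval_continuous v)
  have hEG : Set.extremePoints ℝ (diffSetW C e) ⊆ G := fun μ' h => hb μ' h
  have hsub : diffSetW C e ⊆ G := by
    rw [← hKM]
    exact closure_minimal (convexHull_min hEG hGconv) hGclosed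
  exact hsub hμ

end DobrushinAux
namespace DobrushinAux

open Set

theorem sSup_of_subset_zero {S : Set ℝ} (h : S ⊆ {(0:ℝ)}) : sSup S = 0 := by
  rcases S.eq_empty_or_nonempty with rfl | hne
  · exact Real.sSup_empty
  · rw [Set.Nonempty.subset_singleton_iff hne] at h
    rw [h, csSup_singleton]

theorem main_nondegenerate
    {X₁ : Type*} [NormedAddCommGroup X₁] [NormedSpace ℝ X₁]
    {X₂ : Type*} [NormedAddCommGroup X₂] [NormedSpace ℝ X₂]
    (C₁ : Set X₁) (e₁ : X₁) (C₂ : Set X₂) (e₂ : X₂)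
    (hC₁ : IsCPCone C₁) (hn₁ : IsNormalCone C₁) (he₁ : e₁ ∈ interior C₁)
    (hC₂ : IsCPCone C₂) (he₂ : e₂ ∈ interior C₂)
    (he₁0 : e₁ ≠ 0) (he₂0 : e₂ ≠ 0)
    (T : X₁ →L[ℝ] X₂) (hTe : ∃ c : ℝ, T e₁ = c • e₂) :
    opHNorm C₁ e₁ C₂ e₂ T =
        sSup {r : ℝ | ∃ ν ∈ simplexSet C₂ e₂, ∃ π ∈ simplexSet C₂ e₂,
          ∃ x ∈ orderIntv C₁ e₁, r = ν (T x) - π (T x)} ∧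
      opHNorm C₁ e₁ C₂ e₂ T =
        sSup {r : ℝ | ∃ ν ∈ Set.extremePoints ℝ (simplexSet C₂ e₂),
          ∃ π ∈ Set.extremePoints ℝ (simplexSet C₂ e₂), disjointIn C₂ e₂ ν π ∧
            ∃ x ∈ orderIntv C₁ e₁, r = ν (T x) - π (T x)} := by
  obtain ⟨c, hc⟩ := hTe
  obtain ⟨K₁, hK₁, hKb⟩ := hn₁
  obtain ⟨B₂, hB₂, hBb⟩ := simplex_bound hC₂ he₂
  set I : Set X₁ := orderIntv C₁ e₁ with hI
  set P : Set (X₂ →L[ℝ] ℝ) := simplexSet C₂ e₂ with hP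
  set SetA : Set ℝ := {r : ℝ | ∃ ν ∈ P, ∃ π ∈ P, ∃ x ∈ I, r = ν (T x) - π (T x)} with hSetA
  set SetE : Set ℝ := {r : ℝ | ∃ ν ∈ Set.extremePoints ℝ P,
      ∃ π ∈ Set.extremePoints ℝ P, disjointIn C₂ e₂ ν π ∧
        ∃ x ∈ I, r = ν (T x) - π (T x)} with hSetE
  set SetH : Set ℝ := {r : ℝ | ∃ z : X₁, hopfOsc C₁ e₁ z ≤ 1 ∧ r = hopfOsc C₂ e₂ (T z)}
    with hSetH
  set B0 : ℝ := 2 * (B₂ * (‖T‖ * (K₁ * ‖e₁‖))) with hB0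
  -- uniform bound
  have hBnd : ∀ ν ∈ P, ∀ π ∈ P, ∀ x ∈ I, ν (T x) - π (T x) ≤ B0 := by
    intro ν hν π hπ x hx
    have hxK : ‖x‖ ≤ K₁ * ‖e₁‖ := hKb x e₁ hx.1 hx.2
    have habs : ∀ ρ : X₂ →L[ℝ] ℝ, ρ ∈ P → |ρ (T x)| ≤ B₂ * (‖T‖ * (K₁ * ‖e₁‖)) := by
      intro ρ hρ
      calc |ρ (T x)| ≤ B₂ * ‖T x‖ := hBb ρ hρ _
      _ ≤ B₂ * (‖T‖ * ‖x‖) := by gcongr; exact T.le_opNorm x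
      _ ≤ B₂ * (‖T‖ * (K₁ * ‖e₁‖)) := by gcongr
    have h1 := habs ν hν
    have h2 := habs π hπ
    have := le_abs_self (ν (T x))
    have := neg_abs_le (π (T x))
    rw [hB0]
    linarith
  have hAbdd : BddAbove SetA := by
    refine ⟨B0, ?_⟩
    rintro r ⟨ν, hν, π, hπ, x, hx, rfl⟩
    exact hBnd ν hν π hπ x hx
  have hA0 : (0:ℝ) ∈ SetA := by
    obtain ⟨ν₀, hν₀⟩ := simplex_nonempty hC₂ he₂ he₂0
    exact ⟨ν₀, hν₀, ν₀, hν₀, 0, zero_mem_orderIntv hC₁ he₁, (sub_self _).symm⟩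
  -- hard direction: elements of SetH are bounded by sSup SetA
  have hHle : ∀ r ∈ SetH, r ≤ sSup SetA := by
    rintro r ⟨z, hz, rfl⟩
    apply le_of_forall_pos_le_add
    intro ε hε
    obtain ⟨ν, hν, hνgt⟩ := exists_simplex_gt hC₂ he₂ he₂0 (T z) (half_pos hε)
    obtain ⟨π, hπ, hπlt⟩ := exists_simplex_lt hC₂ he₂ he₂0 (T z) (half_pos hε)
    set m := lowSlope C₁ e₁ z with hm
    set x : X₁ := z - m • e₁ with hxdef
    have hx : x ∈ I := by
      constructor
      · exact lowSlope_mem hC₁ he₁ he₁0 z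
      · have h1 := upSlope_mem hC₁ he₁ he₁0 z
        have hcoef : (0:ℝ) ≤ 1 - (upSlope C₁ e₁ z - m) := by
          have : hopfOsc C₁ e₁ z = upSlope C₁ e₁ z - m := rfl
          rw [this] at hz
          linarith
        have h2 := hC₁.2.1 _ (hC₁.2.2.1 _ hcoef e₁ (interior_subset he₁)) _ h1
        have heq : (1 - (upSlope C₁ e₁ z - m)) • e₁ + (upSlope C₁ e₁ z • e₁ - z)
            = e₁ - x := by rw [hxdef]; module
        rwa [heq] at h2
    have hTx : T x = T z - (m * c) • e₂ := by
      rw [hxdef, map_sub, map_smul, hc, smul_smul]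
    have hνx : ν (T x) = ν (T z) - m * c := by
      rw [hTx, map_sub, map_smul, hν.2, smul_eq_mul, mul_one]
    have hπx : π (T x) = π (T z) - m * c := by
      rw [hTx, map_sub, map_smul, hπ.2, smul_eq_mul, mul_one]
    have hmem : ν (T x) - π (T x) ∈ SetA := ⟨ν, hν, π, hπ, x, hx, rfl⟩
    have hle := le_csSup hAbdd hmem
    have hosc : hopfOsc C₂ e₂ (T z) = upSlope C₂ e₂ (T z) - lowSlope C₂ e₂ (T z) := rfl
    rw [hosc]
    have : ν (T x) - π (T x) = ν (T z) - π (T z) := by rw [hνx, hπx]; ring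
    rw [this] at hle
    linarith
  have hH0 : (0:ℝ) ∈ SetH := by
    refine ⟨0, ?_, ?_⟩
    · rw [hopfOsc_zero hC₁ he₁]; norm_num
    · rw [map_zero, hopfOsc_zero hC₂ he₂]
  have hHbdd : BddAbove SetH := ⟨sSup SetA, fun r hr => hHle r hr⟩
  -- EQ2
  have hEQ2 : opHNorm C₁ e₁ C₂ e₂ T = sSup SetA := by
    apply le_antisymm
    · exact csSup_le ⟨0, hH0⟩ hHle
    · refine csSup_le ⟨0, hA0⟩ ?_
      rintro r ⟨ν, hν, π, hπ, x, hx, rfl⟩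
      have h1 : ν (T x) ≤ upSlope C₂ e₂ (T x) := simplex_le_upSlope hC₂ he₂ hν (T x)
      have h2 : lowSlope C₂ e₂ (T x) ≤ π (T x) := lowSlope_le_simplex hC₂ he₂ hπ (T x)
      have hmem : hopfOsc C₂ e₂ (T x) ∈ SetH :=
        ⟨x, hopfOsc_le_one_of_orderIntv hC₁ he₁ he₁0 hx, rfl⟩
      have hle := le_csSup hHbdd hmem
      have hosc : hopfOsc C₂ e₂ (T x) = upSlope C₂ e₂ (T x) - lowSlope C₂ e₂ (T x) := rfl
      rw [hosc] at hle
      calc ν (T x) - π (T x) ≤ upSlope C₂ e₂ (T x) - lowSlope C₂ e₂ (T x) := by linarith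
      _ ≤ sSup SetH := hle
  -- SetE ⊆ SetA
  have hEsubA : SetE ⊆ SetA := by
    rintro r ⟨ν, hν, π, hπ, _, x, hx, rfl⟩
    exact ⟨ν, extremePoints_subset hν, π, extremePoints_subset hπ, x, hx, rfl⟩
  have hEbdd : BddAbove SetE := hAbdd.mono hEsubA
  -- EQ4
  have hAE : sSup SetA = sSup SetE := by
    apply le_antisymm
    · refine csSup_le ⟨0, hA0⟩ ?_
      rintro r ⟨ν, hν, π, hπ, x, hx, rfl⟩
      have hμD : ν - π ∈ diffSet C₂ e₂ := ⟨ν, hν, π, hπ, rfl⟩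
      have hb : ∀ μ' ∈ Set.extremePoints ℝ (diffSet C₂ e₂), μ' (T x) ≤ sSup SetE := by
        intro μ' hμ'
        obtain ⟨ν', hν', π', hπ', hd, rfl⟩ := extreme_diff_decomp hμ'
        have hmem : ν' (T x) - π' (T x) ∈ SetE := ⟨ν', hν', π', hπ', hd, x, hx, rfl⟩
        have := le_csSup hEbdd hmem
        simpa [ContinuousLinearMap.sub_apply] using this
      have := le_on_diffSet hC₂ he₂ hb _ hμD
      simpa [ContinuousLinearMap.sub_apply] using this
    · rcases SetE.eq_empty_or_nonempty with hE | hE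
      · rw [hE, Real.sSup_empty]
        exact le_csSup hAbdd hA0
      · exact csSup_le hE fun r hr => le_csSup hAbdd (hEsubA hr)
  exact ⟨hEQ2, hEQ2.trans hAE⟩

end DobrushinAux
namespace DobrushinAux

open Set

theorem dual_form
    {X₁ : Type*} [NormedAddCommGroup X₁] [NormedSpace ℝ X₁]
    {X₂ : Type*} [NormedAddCommGroup X₂] [NormedSpace ℝ X₂]
    (C₁ : Set X₁) (e₁ : X₁) (C₂ : Set X₂) (e₂ : X₂)
    (hC₁ : IsCPCone C₁) (hn₁ : IsNormalCone C₁) (he₁ : e₁ ∈ interior C₁)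
    (hC₂ : IsCPCone C₂) (he₂ : e₂ ∈ interior C₂)
    (he₁0 : e₁ ≠ 0)
    (T : X₁ →L[ℝ] X₂) {c : ℝ} (hc : T e₁ = c • e₂)
    (A : Set ((X₂ →L[ℝ] ℝ) × (X₂ →L[ℝ] ℝ)))
    (hA : A ⊆ (simplexSet C₂ e₂) ×ˢ (simplexSet C₂ e₂)) :
    (1/2) * sSup {r : ℝ | ∃ p ∈ A, r = dualTNorm C₁ e₁ (p.1.comp T - p.2.comp T)}
      = sSup {r : ℝ | ∃ p ∈ A, ∃ x ∈ orderIntv C₁ e₁, r = p.1 (T x) - p.2 (T x)} := by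
  obtain ⟨K₁, hK₁, hKb⟩ := hn₁
  obtain ⟨B₂, hB₂, hBb⟩ := simplex_bound hC₂ he₂
  set B0 : ℝ := 2 * (B₂ * (‖T‖ * (K₁ * ‖e₁‖))) with hB0
  have hBnd : ∀ p ∈ A, ∀ x ∈ orderIntv C₁ e₁, p.1 (T x) - p.2 (T x) ≤ B0 := by
    intro p hp x hx
    obtain ⟨h1, h2⟩ := hA hp
    have hxK : ‖x‖ ≤ K₁ * ‖e₁‖ := hKb x e₁ hx.1 hx.2
    have habs : ∀ ρ : X₂ →L[ℝ] ℝ, ρ ∈ simplexSet C₂ e₂ →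
        |ρ (T x)| ≤ B₂ * (‖T‖ * (K₁ * ‖e₁‖)) := by
      intro ρ hρ
      calc |ρ (T x)| ≤ B₂ * ‖T x‖ := hBb ρ hρ _
      _ ≤ B₂ * (‖T‖ * ‖x‖) := by gcongr; exact T.le_opNorm x
      _ ≤ B₂ * (‖T‖ * (K₁ * ‖e₁‖)) := by gcongr
    have ha := habs p.1 h1
    have hb := habs p.2 h2
    have := le_abs_self (p.1 (T x))
    have := neg_abs_le (p.2 (T x))
    rw [hB0]
    linarith
  set Sl : ((X₂ →L[ℝ] ℝ) × (X₂ →L[ℝ] ℝ)) → Set ℝ :=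
    fun p => {r : ℝ | ∃ x ∈ orderIntv C₁ e₁, r = (p.1.comp T - p.2.comp T) x} with hSl
  have hμe : ∀ p ∈ A, (p.1.comp T - p.2.comp T) e₁ = 0 := by
    intro p hp
    obtain ⟨h1, h2⟩ := hA hp
    simp only [ContinuousLinearMap.sub_apply, ContinuousLinearMap.comp_apply, hc,
      map_smul, smul_eq_mul, h1.2, h2.2]
    ring
  have hstep1 : {r : ℝ | ∃ p ∈ A, r = dualTNorm C₁ e₁ (p.1.comp T - p.2.comp T)}
      = {r : ℝ | ∃ p ∈ A, r = 2 * sSup (Sl p)} := by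
    ext r
    constructor
    · rintro ⟨p, hp, rfl⟩
      exact ⟨p, hp, dualTNorm_eq hC₁ he₁ he₁0 (hμe p hp)⟩
    · rintro ⟨p, hp, rfl⟩
      exact ⟨p, hp, (dualTNorm_eq hC₁ he₁ he₁0 (hμe p hp)).symm⟩
  have hstep2 : sSup {r : ℝ | ∃ p ∈ A, r = 2 * sSup (Sl p)}
      = 2 * sSup {r : ℝ | ∃ p ∈ A, r = sSup (Sl p)} := sSup_double A fun p => sSup (Sl p)
  have hSlne : ∀ p ∈ A, (Sl p).Nonempty :=
    fun p _ => ⟨_, 0, zero_mem_orderIntv hC₁ he₁, rfl⟩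
  have hSlbd : ∀ p ∈ A, ∀ r ∈ Sl p, r ≤ B0 := by
    rintro p hp r ⟨x, hx, rfl⟩
    have := hBnd p hp x hx
    simpa [ContinuousLinearMap.sub_apply] using this
  have hstep3 : sSup {r : ℝ | ∃ p ∈ A, r ∈ Sl p}
      = sSup {r : ℝ | ∃ p ∈ A, r = sSup (Sl p)} := sSup_sSup A Sl B0 hSlne hSlbd
  have hstep4 : {r : ℝ | ∃ p ∈ A, r ∈ Sl p}
      = {r : ℝ | ∃ p ∈ A, ∃ x ∈ orderIntv C₁ e₁, r = p.1 (T x) - p.2 (T x)} := by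
    ext r
    constructor
    · rintro ⟨p, hp, x, hx, rfl⟩
      exact ⟨p, hp, x, hx, by simp [ContinuousLinearMap.sub_apply]⟩
    · rintro ⟨p, hp, x, hx, rfl⟩
      exact ⟨p, hp, x, hx, by simp [ContinuousLinearMap.sub_apply]⟩
  rw [hstep1, hstep2, ← hstep3, hstep4]
  ring

end DobrushinAux

open DobrushinAux


theorem opHNorm_eq_abstract_dobrushin
    {X₁ : Type*} [NormedAddCommGroup X₁] [NormedSpace ℝ X₁] [CompleteSpace X₁]
    {X₂ : Type*} [NormedAddCommGroup X₂] [NormedSpace ℝ X₂] [CompleteSpace X₂]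
    (C₁ : Set X₁) (e₁ : X₁) (C₂ : Set X₂) (e₂ : X₂)
    (hC₁ : IsCPCone C₁) (hn₁ : IsNormalCone C₁) (he₁ : e₁ ∈ interior C₁)
    (hC₂ : IsCPCone C₂) (hn₂ : IsNormalCone C₂) (he₂ : e₂ ∈ interior C₂)
    (T : X₁ →L[ℝ] X₂) (hTe : ∃ c : ℝ, T e₁ = c • e₂) :
    opHNorm C₁ e₁ C₂ e₂ T =
        (1 / 2) * sSup {r : ℝ | ∃ ν ∈ simplexSet C₂ e₂, ∃ π ∈ simplexSet C₂ e₂,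
          r = dualTNorm C₁ e₁ (ν.comp T - π.comp T)} ∧
      opHNorm C₁ e₁ C₂ e₂ T =
        sSup {r : ℝ | ∃ ν ∈ simplexSet C₂ e₂, ∃ π ∈ simplexSet C₂ e₂,
          ∃ x ∈ orderIntv C₁ e₁, r = ν (T x) - π (T x)} ∧
      opHNorm C₁ e₁ C₂ e₂ T =
        (1 / 2) * sSup {r : ℝ | ∃ ν ∈ Set.extremePoints ℝ (simplexSet C₂ e₂),
          ∃ π ∈ Set.extremePoints ℝ (simplexSet C₂ e₂), disjointIn C₂ e₂ ν π ∧
            r = dualTNorm C₁ e₁ (ν.comp T - π.comp T)} ∧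
      opHNorm C₁ e₁ C₂ e₂ T =
        sSup {r : ℝ | ∃ ν ∈ Set.extremePoints ℝ (simplexSet C₂ e₂),
          ∃ π ∈ Set.extremePoints ℝ (simplexSet C₂ e₂), disjointIn C₂ e₂ ν π ∧
            ∃ x ∈ orderIntv C₁ e₁, r = ν (T x) - π (T x)} := by
  classical
  by_cases he₂0 : e₂ = 0
  · -- degenerate codomain
    subst he₂0
    have hPempty : simplexSet C₂ (0:X₂) = ∅ := by
      rw [Set.eq_empty_iff_forall_notMem]
      intro μ hμ
      have h := hμ.2
      rw [map_zero] at h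
      exact one_ne_zero h.symm
    have hextempty : Set.extremePoints ℝ (simplexSet C₂ (0:X₂)) = ∅ := by
      rw [← Set.subset_empty_iff, ← hPempty]
      exact extremePoints_subset
    have hall₂ : ∀ v : X₂, v = 0 := all_zero_of_zero_interior hC₂ he₂
    have hTz : ∀ z : X₁, hopfOsc C₂ (0:X₂) (T z) = 0 := fun z => by
      rw [hall₂ (T z)]; exact hopfOsc_zero hC₂ he₂
    have hSetH : {r : ℝ | ∃ z : X₁, hopfOsc C₁ e₁ z ≤ 1 ∧ r = hopfOsc C₂ (0:X₂) (T z)}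
        = {(0:ℝ)} := by
      ext r
      simp only [Set.mem_setOf_eq, Set.mem_singleton_iff]
      constructor
      · rintro ⟨z, _, rfl⟩; exact hTz z
      · rintro rfl
        exact ⟨0, by rw [hopfOsc_zero hC₁ he₁]; norm_num, (hTz 0).symm⟩
    have hopH : opHNorm C₁ e₁ C₂ 0 T = 0 := by
      rw [opHNorm, hSetH, csSup_singleton]
    refine ⟨?_, ?_, ?_, ?_⟩ <;> rw [hopH]
    · have h1 : {r : ℝ | ∃ ν ∈ simplexSet C₂ (0:X₂), ∃ π ∈ simplexSet C₂ (0:X₂),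
          r = dualTNorm C₁ e₁ (ν.comp T - π.comp T)} = ∅ := by simp [hPempty]
      rw [h1, Real.sSup_empty]; norm_num
    · have h1 : {r : ℝ | ∃ ν ∈ simplexSet C₂ (0:X₂), ∃ π ∈ simplexSet C₂ (0:X₂),
          ∃ x ∈ orderIntv C₁ e₁, r = ν (T x) - π (T x)} = ∅ := by simp [hPempty]
      rw [h1, Real.sSup_empty]
    · have h1 : {r : ℝ | ∃ ν ∈ Set.extremePoints ℝ (simplexSet C₂ (0:X₂)),
          ∃ π ∈ Set.extremePoints ℝ (simplexSet C₂ (0:X₂)), disjointIn C₂ 0 ν π ∧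
            r = dualTNorm C₁ e₁ (ν.comp T - π.comp T)} = ∅ := by simp [hextempty]
      rw [h1, Real.sSup_empty]; norm_num
    · have h1 : {r : ℝ | ∃ ν ∈ Set.extremePoints ℝ (simplexSet C₂ (0:X₂)),
          ∃ π ∈ Set.extremePoints ℝ (simplexSet C₂ (0:X₂)), disjointIn C₂ 0 ν π ∧
            ∃ x ∈ orderIntv C₁ e₁, r = ν (T x) - π (T x)} = ∅ := by simp [hextempty]
      rw [h1, Real.sSup_empty]
  by_cases he₁0 : e₁ = 0
  · -- degenerate domain
    subst he₁0
    have hall₁ : ∀ v : X₁, v = 0 := all_zero_of_zero_interior hC₁ he₁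
    have hT0 : ∀ z : X₁, T z = 0 := fun z => by rw [hall₁ z, map_zero]
    have hSetH : {r : ℝ | ∃ z : X₁, hopfOsc C₁ (0:X₁) z ≤ 1 ∧ r = hopfOsc C₂ e₂ (T z)}
        = {(0:ℝ)} := by
      ext r
      simp only [Set.mem_setOf_eq, Set.mem_singleton_iff]
      constructor
      · rintro ⟨z, _, rfl⟩
        rw [hT0 z]; exact hopfOsc_zero hC₂ he₂
      · rintro rfl
        refine ⟨0, by rw [hopfOsc_zero hC₁ he₁]; norm_num, ?_⟩
        rw [hT0 0, hopfOsc_zero hC₂ he₂]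
    have hopH : opHNorm C₁ 0 C₂ e₂ T = 0 := by
      rw [opHNorm, hSetH, csSup_singleton]
    have hdual : ∀ μ : X₁ →L[ℝ] ℝ, dualTNorm C₁ (0:X₁) μ = 0 := by
      intro μ
      have hthset : {r : ℝ | ∃ x : X₁, thompsonNorm C₁ (0:X₁) x ≤ 1 ∧ r = μ x} = {(0:ℝ)} := by
        ext r
        simp only [Set.mem_setOf_eq, Set.mem_singleton_iff]
        constructor
        · rintro ⟨x, _, rfl⟩
          rw [hall₁ x, map_zero]
        · rintro rfl
          refine ⟨0, ?_, (map_zero μ).symm⟩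
          have hs1 : {t : ℝ | t • (0:X₁) - 0 ∈ C₁} = Set.univ := by
            ext t; simp [zero_mem hC₁ he₁]
          have hs2 : {t : ℝ | (0:X₁) - t • (0:X₁) ∈ C₁} = Set.univ := by
            ext t; simp [zero_mem hC₁ he₁]
          rw [thompsonNorm, upSlope, lowSlope, hs1, hs2, sInf_univ_real, sSup_univ_real]
          norm_num
      rw [dualTNorm, hthset, csSup_singleton]
    obtain ⟨ν₀, hν₀⟩ := simplex_nonempty hC₂ he₂ he₂0
    refine ⟨?_, ?_, ?_, ?_⟩ <;> rw [hopH]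
    · have h1 : {r : ℝ | ∃ ν ∈ simplexSet C₂ e₂, ∃ π ∈ simplexSet C₂ e₂,
          r = dualTNorm C₁ (0:X₁) (ν.comp T - π.comp T)} = {(0:ℝ)} := by
        ext r
        simp only [Set.mem_setOf_eq, Set.mem_singleton_iff]
        constructor
        · rintro ⟨ν, _, π, _, rfl⟩; exact hdual _
        · rintro rfl; exact ⟨ν₀, hν₀, ν₀, hν₀, (hdual _).symm⟩
      rw [h1, csSup_singleton]; norm_num
    · have h1 : {r : ℝ | ∃ ν ∈ simplexSet C₂ e₂, ∃ π ∈ simplexSet C₂ e₂,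
          ∃ x ∈ orderIntv C₁ (0:X₁), r = ν (T x) - π (T x)} = {(0:ℝ)} := by
        ext r
        simp only [Set.mem_setOf_eq, Set.mem_singleton_iff]
        constructor
        · rintro ⟨ν, _, π, _, x, _, rfl⟩
          rw [hT0 x, map_zero, map_zero, sub_self]
        · rintro rfl
          exact ⟨ν₀, hν₀, ν₀, hν₀, 0, zero_mem_orderIntv hC₁ he₁, (sub_self _).symm⟩
      rw [h1, csSup_singleton]
    · rw [sSup_of_subset_zero (by rintro r ⟨ν, _, π, _, _, rfl⟩; exact hdual _)]
      norm_num
    · rw [sSup_of_subset_zero ?_]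
      rintro r ⟨ν, _, π, _, _, x, _, rfl⟩
      rw [hT0 x, map_zero, map_zero, sub_self]
      rfl
  -- main nondegenerate case
  obtain ⟨hEQ2, hEQ4⟩ := main_nondegenerate C₁ e₁ C₂ e₂ hC₁ hn₁ he₁ hC₂ he₂ he₁0 he₂0 T hTe
  obtain ⟨c, hc⟩ := hTe
  set P : Set (X₂ →L[ℝ] ℝ) := simplexSet C₂ e₂ with hPdef
  have hEQ1 : opHNorm C₁ e₁ C₂ e₂ T =
      (1 / 2) * sSup {r : ℝ | ∃ ν ∈ simplexSet C₂ e₂, ∃ π ∈ simplexSet C₂ e₂,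
        r = dualTNorm C₁ e₁ (ν.comp T - π.comp T)} := by
    have hconv1 : {r : ℝ | ∃ ν ∈ simplexSet C₂ e₂, ∃ π ∈ simplexSet C₂ e₂,
          r = dualTNorm C₁ e₁ (ν.comp T - π.comp T)}
        = {r : ℝ | ∃ p ∈ (simplexSet C₂ e₂) ×ˢ (simplexSet C₂ e₂),
            r = dualTNorm C₁ e₁ (p.1.comp T - p.2.comp T)} := by
      ext r
      constructor
      · rintro ⟨ν, hν, π, hπ, rfl⟩; exact ⟨(ν, π), ⟨hν, hπ⟩, rfl⟩
      · rintro ⟨⟨ν, π⟩, ⟨hν, hπ⟩, rfl⟩; exact ⟨ν, hν, π, hπ, rfl⟩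
    have hconv2 : {r : ℝ | ∃ p ∈ (simplexSet C₂ e₂) ×ˢ (simplexSet C₂ e₂),
          ∃ x ∈ orderIntv C₁ e₁, r = p.1 (T x) - p.2 (T x)}
        = {r : ℝ | ∃ ν ∈ simplexSet C₂ e₂, ∃ π ∈ simplexSet C₂ e₂,
            ∃ x ∈ orderIntv C₁ e₁, r = ν (T x) - π (T x)} := by
      ext r
      constructor
      · rintro ⟨⟨ν, π⟩, ⟨hν, hπ⟩, x, hx, rfl⟩; exact ⟨ν, hν, π, hπ, x, hx, rfl⟩
      · rintro ⟨ν, hν, π, hπ, x, hx, rfl⟩; exact ⟨(ν, π), ⟨hν, hπ⟩, x, hx, rfl⟩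
    rw [hconv1, dual_form C₁ e₁ C₂ e₂ hC₁ hn₁ he₁ hC₂ he₂ he₁0 T hc _ subset_rfl, hconv2]
    exact hEQ2
  have hEQ3 : opHNorm C₁ e₁ C₂ e₂ T =
      (1 / 2) * sSup {r : ℝ | ∃ ν ∈ Set.extremePoints ℝ (simplexSet C₂ e₂),
        ∃ π ∈ Set.extremePoints ℝ (simplexSet C₂ e₂), disjointIn C₂ e₂ ν π ∧
          r = dualTNorm C₁ e₁ (ν.comp T - π.comp T)} := by
    set A₃ : Set ((X₂ →L[ℝ] ℝ) × (X₂ →L[ℝ] ℝ)) :=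
      {p | p.1 ∈ Set.extremePoints ℝ (simplexSet C₂ e₂) ∧
        p.2 ∈ Set.extremePoints ℝ (simplexSet C₂ e₂) ∧ disjointIn C₂ e₂ p.1 p.2} with hA₃def
    have hA₃ : A₃ ⊆ (simplexSet C₂ e₂) ×ˢ (simplexSet C₂ e₂) := fun p hp =>
      ⟨extremePoints_subset hp.1, extremePoints_subset hp.2.1⟩
    have hconv3 : {r : ℝ | ∃ ν ∈ Set.extremePoints ℝ (simplexSet C₂ e₂),
          ∃ π ∈ Set.extremePoints ℝ (simplexSet C₂ e₂), disjointIn C₂ e₂ ν π ∧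
            r = dualTNorm C₁ e₁ (ν.comp T - π.comp T)}
        = {r : ℝ | ∃ p ∈ A₃, r = dualTNorm C₁ e₁ (p.1.comp T - p.2.comp T)} := by
      ext r
      constructor
      · rintro ⟨ν, hν, π, hπ, hd, rfl⟩; exact ⟨(ν, π), ⟨hν, hπ, hd⟩, rfl⟩
      · rintro ⟨⟨ν, π⟩, ⟨hν, hπ, hd⟩, rfl⟩; exact ⟨ν, hν, π, hπ, hd, rfl⟩
    have hconv4 : {r : ℝ | ∃ p ∈ A₃, ∃ x ∈ orderIntv C₁ e₁, r = p.1 (T x) - p.2 (T x)}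
        = {r : ℝ | ∃ ν ∈ Set.extremePoints ℝ (simplexSet C₂ e₂),
            ∃ π ∈ Set.extremePoints ℝ (simplexSet C₂ e₂), disjointIn C₂ e₂ ν π ∧
              ∃ x ∈ orderIntv C₁ e₁, r = ν (T x) - π (T x)} := by
      ext r
      constructor
      · rintro ⟨⟨ν, π⟩, ⟨hν, hπ, hd⟩, x, hx, rfl⟩; exact ⟨ν, hν, π, hπ, hd, x, hx, rfl⟩
      · rintro ⟨ν, hν, π, hπ, hd, x, hx, rfl⟩; exact ⟨(ν, π), ⟨hν, hπ, hd⟩, x, hx, rfl⟩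
    rw [hconv3, dual_form C₁ e₁ C₂ e₂ hC₁ hn₁ he₁ hC₂ he₂ he₁0 T hc A₃ hA₃, hconv4]
    exact hEQ4
  exact ⟨hEQ1, hEQ2, hEQ3, hEQ4⟩
end

section
/- Let A be an n×n row-stochastic matrix (all entries nonnegative, each row summing to 1). Then the contraction rate of A with respect to the diameter seminorm satisfies: sup{Δ(Ax)/Δ(x) : x ∈ ℝⁿ, Δ(x) ≠ 0} = (1/2) max_{i≠j} Σ_{k=1}^{n} |A_{ik} − A_{jk}| = 1 − min_{i≠j} Σ_{s=1}^{n} min(A_{is}, A_{js}) (Dobrushin's ergodicity coefficient). -/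
noncomputable section

/-- The diameter seminorm `Δ(x) = max_{i,j} (x_i - x_j)` on `ℝⁿ`. -/
def diamSemi (n : ℕ) (x : Fin n → ℝ) : ℝ :=
  sSup {r : ℝ | ∃ i j : Fin n, r = x i - x j}

end

section aux
variable {n : ℕ} [NeZero n]

lemma diam_isGreatest (x : Fin n → ℝ) :
    IsGreatest {r : ℝ | ∃ i j : Fin n, r = x i - x j}
      (Finset.univ.sup' Finset.univ_nonempty x - Finset.univ.inf' Finset.univ_nonempty x) := by
  constructor
  · obtain ⟨i, _, hi⟩ := Finset.exists_mem_eq_sup' Finset.univ_nonempty x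
    obtain ⟨j, _, hj⟩ := Finset.exists_mem_eq_inf' Finset.univ_nonempty x
    exact ⟨i, j, by rw [hi, hj]⟩
  · rintro r ⟨i, j, rfl⟩
    exact sub_le_sub (Finset.le_sup' x (Finset.mem_univ i)) (Finset.inf'_le x (Finset.mem_univ j))

lemma diam_eq (x : Fin n → ℝ) :
    diamSemi n x = Finset.univ.sup' Finset.univ_nonempty x
      - Finset.univ.inf' Finset.univ_nonempty x :=
  (diam_isGreatest x).csSup_eq

lemma inf_le_sup' (x : Fin n → ℝ) :
    Finset.univ.inf' Finset.univ_nonempty x ≤ Finset.univ.sup' Finset.univ_nonempty x := by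
  have i := Classical.arbitrary (Fin n)
  exact le_trans (Finset.inf'_le x (Finset.mem_univ i)) (Finset.le_sup' x (Finset.mem_univ i))

lemma diam_nonneg (x : Fin n → ℝ) : 0 ≤ diamSemi n x := by
  rw [diam_eq]; have := inf_le_sup' x; linarith

lemma sub_le_diam (x : Fin n → ℝ) (i j : Fin n) : x i - x j ≤ diamSemi n x := by
  rw [diam_eq]
  exact (diam_isGreatest x).2 ⟨i, j, rfl⟩
end aux


theorem dobrushin_ergodicity_coefficient (n : ℕ) (hn : 1 < n)
    (A : Matrix (Fin n) (Fin n) ℝ)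
    (hpos : ∀ i j : Fin n, 0 ≤ A i j) (hrow : ∀ i : Fin n, ∑ j, A i j = 1) :
    sSup {r : ℝ | ∃ x : Fin n → ℝ, diamSemi n x ≠ 0 ∧
          r = diamSemi n (A.mulVec x) / diamSemi n x} =
        (1 / 2) * sSup {r : ℝ | ∃ i j : Fin n, i ≠ j ∧ r = ∑ k, |A i k - A j k|} ∧
      sSup {r : ℝ | ∃ x : Fin n → ℝ, diamSemi n x ≠ 0 ∧
          r = diamSemi n (A.mulVec x) / diamSemi n x} =
        1 - sInf {r : ℝ | ∃ i j : Fin n, i ≠ j ∧ r = ∑ s, min (A i s) (A j s)} := by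
  haveI : NeZero n := ⟨by omega⟩
  set T : Finset (Fin n × Fin n) := Finset.univ.filter (fun p => p.1 ≠ p.2) with hTdef
  have hT : T.Nonempty := by
    refine ⟨(⟨0, by omega⟩, ⟨1, by omega⟩), ?_⟩
    simp [hTdef, Fin.ext_iff]
  set D : Fin n × Fin n → ℝ := fun p => ∑ k, |A p.1 k - A p.2 k| with hDdef
  set Mf : Fin n × Fin n → ℝ := fun p => ∑ s, min (A p.1 s) (A p.2 s) with hMdef
  have memT : ∀ {i j : Fin n}, i ≠ j → (i, j) ∈ T := by
    intro i j h; simp [hTdef, h]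
  have hDsup : sSup {r : ℝ | ∃ i j : Fin n, i ≠ j ∧ r = ∑ k, |A i k - A j k|}
      = T.sup' hT D := by
    refine IsGreatest.csSup_eq ⟨?_, ?_⟩
    · obtain ⟨p, hp, hsup⟩ := Finset.exists_mem_eq_sup' hT D
      have hne : p.1 ≠ p.2 := by simpa [hTdef] using hp
      exact ⟨p.1, p.2, hne, hsup⟩
    · rintro r ⟨i, j, hij, rfl⟩
      exact Finset.le_sup' D (memT hij)
  have hMinf : sInf {r : ℝ | ∃ i j : Fin n, i ≠ j ∧ r = ∑ s, min (A i s) (A j s)}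
      = T.inf' hT Mf := by
    refine IsLeast.csInf_eq ⟨?_, ?_⟩
    · obtain ⟨p, hp, hinf⟩ := Finset.exists_mem_eq_inf' hT Mf
      have hne : p.1 ≠ p.2 := by simpa [hTdef] using hp
      exact ⟨p.1, p.2, hne, hinf⟩
    · rintro r ⟨i, j, hij, rfl⟩
      exact Finset.inf'_le Mf (memT hij)
  -- relation D p = 2 - 2 Mf p
  have hDM : ∀ p : Fin n × Fin n, D p = 2 - 2 * Mf p := by
    intro p
    have h1 : ∀ k, |A p.1 k - A p.2 k|
        = A p.1 k + A p.2 k - 2 * min (A p.1 k) (A p.2 k) := by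
      intro k
      rcases le_total (A p.1 k) (A p.2 k) with h | h
      · rw [abs_of_nonpos (by linarith), min_eq_left h]; ring
      · rw [abs_of_nonneg (by linarith), min_eq_right h]; ring
    have h2 : D p = (∑ k, A p.1 k) + (∑ k, A p.2 k)
        - 2 * ∑ k, min (A p.1 k) (A p.2 k) := by
      simp only [hDdef]
      rw [Finset.sum_congr rfl fun k _ => h1 k]
      rw [Finset.sum_sub_distrib, Finset.sum_add_distrib, Finset.mul_sum]
    rw [h2, hrow, hrow]
    simp only [hMdef]
    ring
  have hδ0 : 0 ≤ T.sup' hT D := by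
    obtain ⟨p, hp⟩ := hT
    exact le_trans (Finset.sum_nonneg fun k _ => abs_nonneg _) (Finset.le_sup' D hp)
  have hmax : ∀ p : ℝ, max p 0 = (p + |p|) / 2 := by
    intro p; rcases le_total 0 p with h | h
    · rw [max_eq_left h, abs_of_nonneg h]; ring
    · rw [max_eq_right h, abs_of_nonpos h]; ring
  have hzero : ∀ a b : Fin n, ∑ k, (A a k - A b k) = 0 := by
    intro a b; rw [Finset.sum_sub_distrib, hrow, hrow, sub_self]
  have hhalf : ∀ a b : Fin n, ∑ k, max (A a k - A b k) 0 = D (a, b) / 2 := by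
    intro a b
    rw [Finset.sum_congr rfl fun k _ => hmax (A a k - A b k)]
    rw [← Finset.sum_div, Finset.sum_add_distrib, hzero a b, zero_add, hDdef]
  -- key pointwise contraction
  have key : ∀ (x : Fin n → ℝ) (a b : Fin n),
      A.mulVec x a - A.mulVec x b ≤ (D (a, b) / 2) * diamSemi n x := by
    intro x a b
    obtain ⟨j0, _, hj0⟩ := Finset.exists_mem_eq_inf' (Finset.univ_nonempty (α := Fin n)) x
    set m := Finset.univ.inf' Finset.univ_nonempty x with hm
    have hxm : ∀ k, m ≤ x k := fun k => Finset.inf'_le x (Finset.mem_univ k)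
    have hxM : ∀ k, x k - m ≤ diamSemi n x := by
      intro k; rw [hj0]; exact sub_le_diam x k j0
    have e1 : ∑ k, (A a k - A b k) * (x k - m) = A.mulVec x a - A.mulVec x b := by
      have h : ∀ k, (A a k - A b k) * (x k - m)
          = A a k * x k - A b k * x k - (A a k - A b k) * m := by intro k; ring
      rw [Finset.sum_congr rfl fun k _ => h k]
      rw [Finset.sum_sub_distrib, Finset.sum_sub_distrib, ← Finset.sum_mul, hzero a b,
        zero_mul, sub_zero]
      simp [Matrix.mulVec, dotProduct]
    rw [← e1]
    calc ∑ k, (A a k - A b k) * (x k - m)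
        ≤ ∑ k, max (A a k - A b k) 0 * diamSemi n x := by
          refine Finset.sum_le_sum fun k _ => ?_
          have h1 : 0 ≤ x k - m := sub_nonneg.2 (hxm k)
          calc (A a k - A b k) * (x k - m)
              ≤ max (A a k - A b k) 0 * (x k - m) :=
                mul_le_mul_of_nonneg_right (le_max_left _ _) h1
            _ ≤ max (A a k - A b k) 0 * diamSemi n x :=
                mul_le_mul_of_nonneg_left (hxM k) (le_max_right _ _)
      _ = (D (a, b) / 2) * diamSemi n x := by rw [← Finset.sum_mul, hhalf a b]
  have contract : ∀ x : Fin n → ℝ,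
      diamSemi n (A.mulVec x) ≤ ((1 : ℝ) / 2) * T.sup' hT D * diamSemi n x := by
    intro x
    rw [diam_eq (A.mulVec x)]
    obtain ⟨a, _, ha⟩ := Finset.exists_mem_eq_sup' (Finset.univ_nonempty (α := Fin n)) (A.mulVec x)
    obtain ⟨b, _, hb⟩ := Finset.exists_mem_eq_inf' (Finset.univ_nonempty (α := Fin n)) (A.mulVec x)
    rw [ha, hb]
    refine (key x a b).trans ?_
    refine mul_le_mul_of_nonneg_right ?_ (diam_nonneg x)
    by_cases hab : a = b
    · subst hab
      have : D (a, a) = 0 := by simp [hDdef]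
      rw [this]; linarith
    · have := Finset.le_sup' D (memT hab)
      linarith
  -- the main identity
  have main : sSup {r : ℝ | ∃ x : Fin n → ℝ, diamSemi n x ≠ 0 ∧
      r = diamSemi n (A.mulVec x) / diamSemi n x} = (1 / 2) * T.sup' hT D := by
    refine IsGreatest.csSup_eq ⟨?_, ?_⟩
    · rcases eq_or_lt_of_le hδ0 with h0 | h0
      · -- degenerate case: all rows equal
        set x0 : Fin n → ℝ := fun k => if k = (⟨0, by omega⟩ : Fin n) then 1 else 0 with hx0
        have h1 : (1 : ℝ) ≤ diamSemi n x0 := by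
          have := sub_le_diam x0 ⟨0, by omega⟩ ⟨1, by omega⟩
          simpa [hx0] using this
        have hdne : diamSemi n x0 ≠ 0 := by intro hc; rw [hc] at h1; linarith
        have hAeq : ∀ i j k : Fin n, A i k = A j k := by
          intro i j k
          by_cases hij : i = j
          · rw [hij]
          · have hD0 : D (i, j) = 0 := by
              have hle := Finset.le_sup' D (memT hij)
              have hge : 0 ≤ D (i, j) := Finset.sum_nonneg fun k _ => abs_nonneg _
              rw [← h0] at hle; linarith
            have := (Finset.sum_eq_zero_iff_of_nonneg
              (fun k _ => abs_nonneg (A i k - A j k))).1 hD0 k (Finset.mem_univ k)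
            have := abs_eq_zero.1 this
            linarith
        have hcst : diamSemi n (A.mulVec x0) = 0 := by
          rw [diam_eq]
          obtain ⟨a, _, ha⟩ := Finset.exists_mem_eq_sup'
            (Finset.univ_nonempty (α := Fin n)) (A.mulVec x0)
          obtain ⟨b, _, hb⟩ := Finset.exists_mem_eq_inf'
            (Finset.univ_nonempty (α := Fin n)) (A.mulVec x0)
          rw [ha, hb]
          have : A.mulVec x0 a = A.mulVec x0 b := by
            have hre : A a = A b := funext fun k => hAeq a b k
            simp only [Matrix.mulVec]
            rw [hre]
          rw [this, sub_self]
        exact ⟨x0, hdne, by rw [hcst, zero_div, ← h0, mul_zero]⟩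
      · -- nondegenerate case
        obtain ⟨⟨i, j⟩, hp, hsup⟩ := Finset.exists_mem_eq_sup' hT D
        have hij : i ≠ j := by simpa [hTdef] using hp
        set x0 : Fin n → ℝ := fun k => if A j k < A i k then 1 else 0 with hx0
        have hDp : 0 < D (i, j) := by rw [← hsup]; exact h0
        have hex_pos : ∃ k, A j k < A i k := by
          by_contra hc; push_neg at hc
          have hall : D (i, j) = ∑ k, -(A i k - A j k) :=
            Finset.sum_congr rfl fun k _ => abs_of_nonpos (by linarith [hc k])
          rw [Finset.sum_neg_distrib, hzero i j, neg_zero] at hall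
          linarith
        have hex_neg : ∃ k, ¬ A j k < A i k := by
          by_contra hc; push_neg at hc
          have : (0 : ℝ) < ∑ k, (A i k - A j k) :=
            Finset.sum_pos (fun k _ => sub_pos.2 (hc k)) Finset.univ_nonempty
          rw [hzero i j] at this; exact lt_irrefl 0 this
        have hsupx : Finset.univ.sup' Finset.univ_nonempty x0 = 1 := by
          apply le_antisymm
          · refine Finset.sup'_le _ _ fun k _ => ?_
            by_cases h : A j k < A i k <;> simp [hx0, h]
          · obtain ⟨k, hk⟩ := hex_pos
            have hv : x0 k = 1 := by simp [hx0, hk]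
            rw [← hv]; exact Finset.le_sup' x0 (Finset.mem_univ k)
        have hinfx : Finset.univ.inf' Finset.univ_nonempty x0 = 0 := by
          apply le_antisymm
          · obtain ⟨k, hk⟩ := hex_neg
            have hv : x0 k = 0 := by simp [hx0, hk]
            rw [← hv]; exact Finset.inf'_le x0 (Finset.mem_univ k)
          · refine Finset.le_inf' _ _ fun k _ => ?_
            by_cases h : A j k < A i k <;> simp [hx0, h]
        have hdx : diamSemi n x0 = 1 := by rw [diam_eq, hsupx, hinfx, sub_zero]
        have heq : A.mulVec x0 i - A.mulVec x0 j = D (i, j) / 2 := by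
          have e : ∀ k, (A i k - A j k) * x0 k = max (A i k - A j k) 0 := by
            intro k
            by_cases h : A j k < A i k
            · simp only [hx0, if_pos h, mul_one]
              rw [max_eq_left (by linarith)]
            · simp only [hx0, if_neg h, mul_zero]
              push_neg at h
              rw [max_eq_right (by linarith)]
          have e2 : A.mulVec x0 i - A.mulVec x0 j = ∑ k, (A i k - A j k) * x0 k := by
            simp only [Matrix.mulVec, dotProduct, sub_mul]
            rw [Finset.sum_sub_distrib]
          rw [e2, Finset.sum_congr rfl fun k _ => e k, hhalf i j]
        have hup : diamSemi n (A.mulVec x0) ≤ D (i, j) / 2 := by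
          have := contract x0
          rw [hdx, mul_one, hsup] at this
          linarith
        have hlow : D (i, j) / 2 ≤ diamSemi n (A.mulVec x0) := by
          rw [← heq]; exact sub_le_diam (A.mulVec x0) i j
        refine ⟨x0, by rw [hdx]; norm_num, ?_⟩
        rw [hdx, div_one, le_antisymm hup hlow, hsup]; ring
    · rintro r ⟨x, hx, rfl⟩
      have hpos' : 0 < diamSemi n x := (diam_nonneg x).lt_of_ne (Ne.symm hx)
      rw [div_le_iff₀ hpos']
      exact contract x
  constructor
  · rw [hDsup]; exact main
  · rw [main, hMinf]
    have h1 : T.sup' hT D ≤ 2 - 2 * T.inf' hT Mf := by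
      refine Finset.sup'_le _ _ fun p hp => ?_
      rw [hDM p]
      have := Finset.inf'_le Mf hp
      linarith
    have h2 : 2 - 2 * T.inf' hT Mf ≤ T.sup' hT D := by
      obtain ⟨q, hq, hq'⟩ := Finset.exists_mem_eq_inf' hT Mf
      have := Finset.le_sup' D hq
      rw [hDM q] at this
      rw [hq']
      linarith
    linarith
end

section
/- Let A be a real n×n matrix with A𝟙 = 0, where 𝟙 = (1,…,1)ᵀ. Then the least constant α ∈ ℝ such that Δ(exp(tA)x) ≤ e^{αt}Δ(x) for all t ≥ 0 and all x ∈ ℝⁿ is h(A) = −min_{i≠j} (A_{ji} + A_{ij} + Σ_{k∉{i,j}} min(A_{ik}, A_{jk})). -/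
open Filter Topology NormedSpace Set

attribute [local instance] Matrix.linftyOpNormedRing Matrix.linftyOpNormedAlgebra

namespace DiamContractionAux

variable {n : ℕ}

lemma setFinite (x : Fin n → ℝ) : {r : ℝ | ∃ i j : Fin n, r = x i - x j}.Finite := by
  have hs : {r : ℝ | ∃ i j : Fin n, r = x i - x j} ⊆
      Set.range (fun p : Fin n × Fin n => x p.1 - x p.2) := by
    rintro r ⟨i, j, rfl⟩; exact ⟨(i, j), rfl⟩
  exact (Set.finite_range _).subset hs

lemma sub_le_diam (x : Fin n → ℝ) (i j : Fin n) : x i - x j ≤ diamSemi n x :=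
  le_csSup (setFinite x).bddAbove ⟨i, j, rfl⟩

lemma diam_le (x : Fin n → ℝ) {c : ℝ} (i0 : Fin n) (h : ∀ i j, x i - x j ≤ c) :
    diamSemi n x ≤ c :=
  csSup_le ⟨x i0 - x i0, i0, i0, rfl⟩ (by rintro r ⟨i, j, rfl⟩; exact h i j)

lemma diam_nonneg (x : Fin n → ℝ) (i0 : Fin n) : 0 ≤ diamSemi n x := by
  have h := sub_le_diam x i0 i0; linarith

lemma diam_mem (x : Fin n → ℝ) (i0 : Fin n) : ∃ i j, diamSemi n x = x i - x j := by
  have hne : {r : ℝ | ∃ i j : Fin n, r = x i - x j}.Nonempty := ⟨x i0 - x i0, i0, i0, rfl⟩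
  exact hne.csSup_mem (setFinite x)

/-- The set whose infimum gives (minus) the contraction rate. -/
def hopSet (n : ℕ) (A : Matrix (Fin n) (Fin n) ℝ) : Set ℝ :=
  {r : ℝ | ∃ i j : Fin n, i ≠ j ∧
      r = A j i + A i j + ∑ k ∈ Finset.univ \ {i, j}, min (A i k) (A j k)}

lemma hopSet_finite (A : Matrix (Fin n) (Fin n) ℝ) : (hopSet n A).Finite := by
  have hs : hopSet n A ⊆ Set.range (fun p : Fin n × Fin n =>
      A p.2 p.1 + A p.1 p.2 + ∑ k ∈ Finset.univ \ {p.1, p.2}, min (A p.1 k) (A p.2 k)) := by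
    rintro r ⟨i, j, _, rfl⟩; exact ⟨(i, j), rfl⟩
  exact (Set.finite_range _).subset hs

lemma hopSet_nonempty (hn : 1 < n) (A : Matrix (Fin n) (Fin n) ℝ) : (hopSet n A).Nonempty := by
  refine ⟨_, ⟨⟨0, by omega⟩, ⟨1, hn⟩, ?_, rfl⟩⟩
  intro h
  have := congrArg Fin.val h
  simp at this

/-- Key algebraic estimate. -/
lemma key_bound (A : Matrix (Fin n) (Fin n) ℝ) (hA : ∀ l, ∑ k, A l k = 0)
    {i j : Fin n} (hij : i ≠ j) (y : Fin n → ℝ)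
    (hmax : ∀ k, y k ≤ y i) (hmin : ∀ k, y j ≤ y k) :
    A.mulVec y i - A.mulVec y j ≤
      -(A j i + A i j + ∑ k ∈ Finset.univ \ {i, j}, min (A i k) (A j k)) * (y i - y j) := by
  have hD0 : 0 ≤ y i - y j := by have := hmin i; linarith
  have e1 : A.mulVec y i - A.mulVec y j
      = ∑ k, (A i k * (y k - y i) - A j k * (y k - y j)) := by
    have h1 : ∑ k, A i k * y i = 0 := by rw [← Finset.sum_mul, hA i, zero_mul]
    have h2 : ∑ k, A j k * y j = 0 := by rw [← Finset.sum_mul, hA j, zero_mul]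
    simp only [Matrix.mulVec, dotProduct, mul_sub]
    rw [Finset.sum_sub_distrib, Finset.sum_sub_distrib, Finset.sum_sub_distrib, h1, h2]
    ring
  rw [e1, ← Finset.sum_sdiff (Finset.subset_univ ({i, j} : Finset (Fin n)))]
  have hpair : ∑ k ∈ ({i, j} : Finset (Fin n)),
      (A i k * (y k - y i) - A j k * (y k - y j))
      = -(A j i) * (y i - y j) - A i j * (y i - y j) := by
    rw [Finset.sum_pair hij]; ring
  have hterm : ∀ k ∈ Finset.univ \ ({i, j} : Finset (Fin n)),
      A i k * (y k - y i) - A j k * (y k - y j) ≤ -(min (A i k) (A j k)) * (y i - y j) := by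
    intro k _
    rcases le_total (A i k) (A j k) with h | h
    · rw [min_eq_left h]
      nlinarith [mul_nonneg (sub_nonneg.2 h) (sub_nonneg.2 (hmin k))]
    · rw [min_eq_right h]
      nlinarith [mul_nonneg (sub_nonneg.2 h) (sub_nonneg.2 (hmax k))]
  have hsum := Finset.sum_le_sum hterm
  have hmul : ∑ k ∈ Finset.univ \ ({i, j} : Finset (Fin n)),
      -(min (A i k) (A j k)) * (y i - y j)
      = -(∑ k ∈ Finset.univ \ ({i, j} : Finset (Fin n)), min (A i k) (A j k)) * (y i - y j) := by
    rw [← Finset.sum_mul, ← Finset.sum_neg_distrib]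
  rw [hmul] at hsum
  rw [hpair]
  nlinarith [hsum]

/-- Derivative of the flow in each coordinate. -/
lemma hasDerivAt_flow (A : Matrix (Fin n) (Fin n) ℝ) (x : Fin n → ℝ) (k : Fin n) (t : ℝ) :
    HasDerivAt (fun s : ℝ => (exp (s • A)).mulVec x k)
      (A.mulVec ((exp (t • A)).mulVec x) k) t := by
  have hd : HasDerivAt (fun s : ℝ => exp (s • A)) (A * exp (t • A)) t :=
    hasDerivAt_exp_smul_const' A t
  have hent : ∀ l : Fin n, HasDerivAt (fun s : ℝ => exp (s • A) k l)
      ((A * exp (t • A)) k l) t := by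
    intro l
    set L : Matrix (Fin n) (Fin n) ℝ →L[ℝ] ℝ :=
      LinearMap.toContinuousLinearMap (Matrix.entryLinearMap ℝ ℝ k l)
    exact (L.hasFDerivAt).comp_hasDerivAt t hd
  have hsum : HasDerivAt (fun s : ℝ => ∑ l, exp (s • A) k l * x l)
      (∑ l, (A * exp (t • A)) k l * x l) t :=
    HasDerivAt.fun_sum (fun l _ => (hent l).mul_const (x l))
  have e2 : (∑ l, (A * exp (t • A)) k l * x l) = A.mulVec ((exp (t • A)).mulVec x) k := by
    rw [Matrix.mulVec_mulVec]
    simp [Matrix.mulVec, dotProduct]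
  rw [← e2]
  simpa [Matrix.mulVec, dotProduct] using hsum

end DiamContractionAux

open DiamContractionAux

theorem linear_flow_diameter_contraction_rate (n : ℕ) (hn : 1 < n)
    (A : Matrix (Fin n) (Fin n) ℝ) (hA : A.mulVec (fun _ => (1 : ℝ)) = 0) :
    IsLeast {α : ℝ | ∀ t : ℝ, 0 ≤ t → ∀ x : Fin n → ℝ,
        diamSemi n ((NormedSpace.exp (t • A)).mulVec x) ≤ Real.exp (α * t) * diamSemi n x}
      (- sInf {r : ℝ | ∃ i j : Fin n, i ≠ j ∧
          r = A j i + A i j + ∑ k ∈ Finset.univ \ {i, j}, min (A i k) (A j k)}) := by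
  classical
  have npos : 0 < n := by omega
  set i0 : Fin n := ⟨0, npos⟩ with hi0
  have hTset : {r : ℝ | ∃ i j : Fin n, i ≠ j ∧
      r = A j i + A i j + ∑ k ∈ Finset.univ \ {i, j}, min (A i k) (A j k)} = hopSet n A := rfl
  rw [hTset]
  set h : ℝ := -sInf (hopSet n A) with hh
  have rowsum : ∀ l, ∑ k, A l k = 0 := by
    intro l
    have hl := congrFun hA l
    simpa [Matrix.mulVec, dotProduct] using hl
  constructor
  · -- membership: the bound holds with α = h
    intro t ht x
    set y : ℝ → Fin n → ℝ := fun s => (exp (s • A)).mulVec x with hy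
    set f : ℝ → ℝ := fun s => diamSemi n (y s) with hf
    have hyd : ∀ (s : ℝ) (k : Fin n), HasDerivAt (fun u => y u k) (A.mulVec (y s) k) s :=
      fun s k => hasDerivAt_flow A x k s
    have hgd : ∀ (p : Fin n × Fin n) (s : ℝ),
        HasDerivAt (fun u => y u p.1 - y u p.2)
          (A.mulVec (y s) p.1 - A.mulVec (y s) p.2) s :=
      fun p s => (hyd s p.1).sub (hyd s p.2)
    have hy0 : y 0 = x := by
      rw [hy]; simp [Matrix.one_mulVec]
    -- continuity of f
    have hfsup : f = fun s => (Finset.univ : Finset (Fin n × Fin n)).sup'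
        ⟨(i0, i0), Finset.mem_univ _⟩ (fun p => y s p.1 - y s p.2) := by
      funext s
      apply le_antisymm
      · obtain ⟨i, j, hij⟩ := diam_mem (y s) i0
        refine le_trans (le_of_eq hij) ?_
        exact Finset.le_sup' (f := fun p : Fin n × Fin n => y s p.1 - y s p.2)
          (Finset.mem_univ (i, j))
      · exact Finset.sup'_le _ _ fun p _ => sub_le_diam (y s) p.1 p.2
    have hfc : Continuous f := by
      rw [hfsup]
      exact continuous_iff_continuousAt.2 fun s =>
        ContinuousAt.finset_sup'_apply _ fun p _ => (hgd p s).continuousAt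
    -- derivative bound at active pairs
    have key : ∀ (s : ℝ) (p : Fin n × Fin n), y s p.1 - y s p.2 = f s →
        A.mulVec (y s) p.1 - A.mulVec (y s) p.2 ≤ h * f s := by
      intro s p hp
      rcases eq_or_ne p.1 p.2 with he | hne
      · have hf0 : f s = 0 := by rw [← hp, he, sub_self]
        rw [hf0, he, sub_self, mul_zero]
      · have hp' : y s p.1 - y s p.2 = diamSemi n (y s) := hp
        have hmax : ∀ k, y s k ≤ y s p.1 := by
          intro k
          have h1 := sub_le_diam (y s) k p.2
          linarith [hp']
        have hmin : ∀ k, y s p.2 ≤ y s k := by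
          intro k
          have h1 := sub_le_diam (y s) p.1 k
          linarith [hp']
        have hk := key_bound A rowsum hne (y s) hmax hmin
        have hc : (A p.2 p.1 + A p.1 p.2 +
            ∑ k ∈ Finset.univ \ {p.1, p.2}, min (A p.1 k) (A p.2 k)) ∈ hopSet n A :=
          ⟨p.1, p.2, hne, rfl⟩
        have h1 : sInf (hopSet n A) ≤ _ := csInf_le (hopSet_finite A).bddBelow hc
        have h2 : -(A p.2 p.1 + A p.1 p.2 +
            ∑ k ∈ Finset.univ \ {p.1, p.2}, min (A p.1 k) (A p.2 k)) ≤ h := by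
          rw [hh]; linarith
        have hD : 0 ≤ f s := diam_nonneg _ i0
        calc A.mulVec (y s) p.1 - A.mulVec (y s) p.2
            ≤ -(A p.2 p.1 + A p.1 p.2 +
              ∑ k ∈ Finset.univ \ {p.1, p.2}, min (A p.1 k) (A p.2 k)) *
                (y s p.1 - y s p.2) := hk
          _ = -(A p.2 p.1 + A p.1 p.2 +
              ∑ k ∈ Finset.univ \ {p.1, p.2}, min (A p.1 k) (A p.2 k)) * f s := by rw [hp]
          _ ≤ h * f s := mul_le_mul_of_nonneg_right h2 hD
    -- Gronwall
    have G := le_gronwallBound_of_liminf_deriv_right_le (f := f) (f' := fun s => h * f s)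
        (δ := f 0) (K := h) (ε := 0) (a := 0) (b := t) hfc.continuousOn
        ?_ le_rfl (fun s _ => by simp) t ⟨le_refl 0 |>.trans ht, le_rfl⟩
    · rw [sub_zero, gronwallBound_ε0] at G
      have hf0 : f 0 = diamSemi n x := by show diamSemi n (y 0) = _; rw [hy0]
      rw [hf0] at G
      calc diamSemi n ((exp (t • A)).mulVec x) = f t := rfl
        _ ≤ diamSemi n x * Real.exp (h * t) := G
        _ = Real.exp (h * t) * diamSemi n x := mul_comm _ _
    · -- the liminf condition
      intro s _ r hr
      set Q : Finset (Fin n × Fin n) :=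
        Finset.univ.filter (fun p => y s p.1 - y s p.2 = f s) with hQ
      have hQne : Q.Nonempty := by
        obtain ⟨i, j, hij⟩ := diam_mem (y s) i0
        exact ⟨(i, j), Finset.mem_filter.2 ⟨Finset.mem_univ _, hij.symm⟩⟩
      have E1 : ∀ᶠ z in 𝓝[>] s, ∀ p ∈ Q,
          (z - s)⁻¹ * ((y z p.1 - y z p.2) - (y s p.1 - y s p.2)) < r := by
        rw [eventually_all_finset]
        intro p hp
        have hds : A.mulVec (y s) p.1 - A.mulVec (y s) p.2 < r :=
          lt_of_le_of_lt (key s p (Finset.mem_filter.1 hp).2) hr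
        have hslope : Tendsto (slope (fun u => y u p.1 - y u p.2) s) (𝓝[>] s)
            (𝓝 (A.mulVec (y s) p.1 - A.mulVec (y s) p.2)) :=
          (hasDerivAt_iff_tendsto_slope.1 (hgd p s)).mono_left
            (nhdsWithin_mono s fun z hz => ne_of_gt hz)
        filter_upwards [hslope.eventually_lt_const hds] with z hz
        simpa [slope_def_field, div_eq_inv_mul, smul_eq_mul, slope] using hz
      have hMc : ContinuousAt (fun z => Q.sup' hQne (fun p => y z p.1 - y z p.2)) s :=
        ContinuousAt.finset_sup'_apply hQne fun p _ => (hgd p s).continuousAt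
      have hMs : Q.sup' hQne (fun p => y s p.1 - y s p.2) = f s := by
        apply le_antisymm
        · exact Finset.sup'_le _ _ fun p hp => le_of_eq (Finset.mem_filter.1 hp).2
        · obtain ⟨q, hq⟩ := hQne
          have := (Finset.mem_filter.1 hq).2
          rw [← this]
          exact Finset.le_sup' (f := fun p : Fin n × Fin n => y s p.1 - y s p.2) hq
      have E2 : ∀ᶠ z in 𝓝[>] s, f z ≤ Q.sup' hQne (fun p => y z p.1 - y z p.2) := by
        have hev : ∀ᶠ z in 𝓝 s, ∀ p ∈ (Finset.univ \ Q : Finset (Fin n × Fin n)),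
            y z p.1 - y z p.2 < Q.sup' hQne (fun q => y z q.1 - y z q.2) := by
          rw [eventually_all_finset]
          intro p hp
          have hpq : p ∉ Q := (Finset.mem_sdiff.1 hp).2
          have hne : y s p.1 - y s p.2 ≠ f s := by
            intro hcon
            exact hpq (Finset.mem_filter.2 ⟨Finset.mem_univ _, hcon⟩)
          have hlt : y s p.1 - y s p.2 < f s :=
            lt_of_le_of_ne (sub_le_diam (y s) p.1 p.2) hne
          exact (hgd p s).continuousAt.eventually_lt hMc (by rw [hMs]; exact hlt)
        filter_upwards [nhdsWithin_le_nhds hev] with z hz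
        apply diam_le (y z) i0
        intro a b
        by_cases hab : (a, b) ∈ Q
        · exact Finset.le_sup' (f := fun p : Fin n × Fin n => y z p.1 - y z p.2) hab
        · exact le_of_lt (hz (a, b) (Finset.mem_sdiff.2 ⟨Finset.mem_univ _, hab⟩))
      have E3 : ∀ᶠ z in 𝓝[>] s, (z - s)⁻¹ * (f z - f s) < r := by
        filter_upwards [E1, E2, self_mem_nhdsWithin] with z h1 h2 hz
        obtain ⟨q, hq, hqe⟩ := Finset.exists_mem_eq_sup' hQne
          (fun p : Fin n × Fin n => y z p.1 - y z p.2)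
        have hq2 : y s q.1 - y s q.2 = f s := (Finset.mem_filter.1 hq).2
        have hposz : (0 : ℝ) < (z - s)⁻¹ := inv_pos.2 (sub_pos.2 hz)
        have hle : f z - f s ≤ (y z q.1 - y z q.2) - (y s q.1 - y s q.2) := by
          rw [hq2, ← hqe]; linarith
        calc (z - s)⁻¹ * (f z - f s)
            ≤ (z - s)⁻¹ * ((y z q.1 - y z q.2) - (y s q.1 - y s q.2)) :=
              mul_le_mul_of_nonneg_left hle hposz.le
          _ < r := h1 q hq
      exact E3.frequently
  · -- lower bound: any admissible α is ≥ h
    intro α hα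
    rw [hh, neg_le]
    apply le_csInf (hopSet_nonempty hn A)
    rintro c ⟨i, j, hij, rfl⟩
    rw [neg_le]
    -- construct the extremal vector
    set x : Fin n → ℝ := fun k => if k = i then 1 else if k = j then 0
      else if A j k ≤ A i k then 1 else 0 with hx
    have hxi : x i = 1 := by simp [hx]
    have hxj : x j = 0 := by simp [hx, hij.symm]
    have hx01 : ∀ k, x k = 0 ∨ x k = 1 := by
      intro k
      rw [hx]
      by_cases h1 : k = i
      · right; simp [h1]
      · by_cases h2 : k = j
        · left; rw [h2]; simp [Ne.symm hij]
        · by_cases h3 : A j k ≤ A i k <;> simp [h1, h2, h3]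
    have hdiam : diamSemi n x = 1 := by
      apply le_antisymm
      · apply diam_le x i0
        intro a b
        rcases hx01 a with h1 | h1 <;> rcases hx01 b with h2 | h2 <;> rw [h1, h2] <;> norm_num
      · have hs := sub_le_diam x i j
        rw [hxi, hxj] at hs; linarith
    set y : ℝ → Fin n → ℝ := fun s => (exp (s • A)).mulVec x with hy
    have hy0 : y 0 = x := by rw [hy]; simp [Matrix.one_mulVec]
    set g : ℝ → ℝ := fun s => y s i - y s j with hg
    have hg0 : g 0 = 1 := by rw [hg]; simp [hy0, hxi, hxj]
    -- derivative of g at 0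
    have hgd : HasDerivAt g (A.mulVec x i - A.mulVec x j) 0 := by
      have hexp0 : (exp ((0 : ℝ) • A)).mulVec x = x := by simp [Matrix.one_mulVec]
      have h2 := (hasDerivAt_flow A x i 0).sub (hasDerivAt_flow A x j 0)
      rw [hexp0] at h2
      exact h2
    -- compute the derivative
    have hderiv : A.mulVec x i - A.mulVec x j
        = -(A j i + A i j + ∑ k ∈ Finset.univ \ {i, j}, min (A i k) (A j k)) := by
      have hdiff : ∀ k ∈ Finset.univ \ ({i, j} : Finset (Fin n)),
          (A i k - A j k) * x k = A i k - min (A i k) (A j k) := by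
        intro k hk
        have hki : k ≠ i := by
          intro hcon; rw [hcon] at hk
          exact (Finset.mem_sdiff.1 hk).2 (by simp)
        have hkj : k ≠ j := by
          intro hcon; rw [hcon] at hk
          exact (Finset.mem_sdiff.1 hk).2 (by simp)
        rw [hx]
        by_cases h3 : A j k ≤ A i k
        · rw [min_eq_right h3]; simp [hki, hkj, h3]
        · rw [min_eq_left (le_of_not_ge h3)]; simp [hki, hkj, h3]
      have hsumA : ∑ k ∈ Finset.univ \ ({i, j} : Finset (Fin n)), A i k
          = -A i i - A i j := by
        have hs := Finset.sum_sdiff (f := fun k => A i k)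
          (Finset.subset_univ ({i, j} : Finset (Fin n)))
        rw [rowsum i, Finset.sum_pair hij] at hs
        linarith
      have e1 : A.mulVec x i - A.mulVec x j = ∑ k, (A i k - A j k) * x k := by
        simp only [Matrix.mulVec, dotProduct, sub_mul]
        rw [Finset.sum_sub_distrib]
      rw [e1, ← Finset.sum_sdiff (Finset.subset_univ ({i, j} : Finset (Fin n))),
        Finset.sum_congr rfl hdiff, Finset.sum_sub_distrib, hsumA, Finset.sum_pair hij,
        hxi, hxj]
      ring
    -- comparison of slopes
    have hcomp : ∀ z ∈ Ioi (0 : ℝ),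
        slope g 0 z ≤ slope (fun u => Real.exp (α * u)) 0 z := by
      intro z hz
      have hz0 : (0 : ℝ) < z := hz
      have hb := hα z hz0.le x
      rw [hdiam, mul_one] at hb
      have hgz : g z ≤ Real.exp (α * z) := le_trans (sub_le_diam (y z) i j) hb
      rw [slope_def_field, slope_def_field, hg0]
      have he0 : Real.exp (α * 0) = 1 := by norm_num
      rw [he0]
      gcongr
    have hslope1 : Tendsto (slope g 0) (𝓝[>] 0) (𝓝 (A.mulVec x i - A.mulVec x j)) :=
      (hasDerivAt_iff_tendsto_slope.1 hgd).mono_left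
        (nhdsWithin_mono 0 fun z hz => ne_of_gt hz)
    have hexpd : HasDerivAt (fun u => Real.exp (α * u)) α 0 := by
      have h1 : HasDerivAt (fun u : ℝ => α * u) α 0 := by
        simpa using (hasDerivAt_id (0 : ℝ)).const_mul α
      have h2 := h1.exp
      simpa using h2
    have hslope2 : Tendsto (slope (fun u => Real.exp (α * u)) 0) (𝓝[>] 0) (𝓝 α) :=
      (hasDerivAt_iff_tendsto_slope.1 hexpd).mono_left
        (nhdsWithin_mono 0 fun z hz => ne_of_gt hz)
    have hfin : A.mulVec x i - A.mulVec x j ≤ α :=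
      le_of_tendsto_of_tendsto hslope1 hslope2
        (eventually_mem_nhdsWithin.mono fun z hz => hcomp z hz)
    rw [← hderiv]
    exact hfin
end
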